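/- arXiv:2307.11738 — 11 statements merged into one kernel-verified Lean document; each statement's English description precedes it below -/
import Mathlib

section
/- Let f : [0,1] → ℝ be continuous. Then f is completely non-Hölder if and only if for every non-constant real polynomial P, the function P ∘ f has at no point x₀ ∈ [0,1] a one-sided derivative equal to 0. -/
open Filter Set Topology MeasureTheory ProbabilityTheory

/-- The tent function: `2x` on `[0,1/2]`, `2-2x` on `[1/2,1]`, `0` outside `[0,1]`. -/
noncomputable def tent (x : ℝ) : ℝ :=
  if x ≤ 0 ∨ 1 ≤ x then 0 else if x ≤ 1 / 2 then 2 * x else 2 - 2 * x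

/-- The Faber–Schauder system `σ_{n,i}(x) = σ(2^n x - i)`. -/
noncomputable def fs (n i : ℕ) (x : ℝ) : ℝ := tent (2 ^ n * x - i)

/-- `f` is `α`-Hölder at `x₀` from the right (within `[0,1]`):
`limsup_{y ↘ x₀} |f y - f x₀| / |y - x₀|^α < ∞`. -/
def HolderRightAt (f : ℝ → ℝ) (α x₀ : ℝ) : Prop :=
  ∃ C : ℝ, ∀ᶠ y in nhdsWithin x₀ (Set.Ioc x₀ 1), |f y - f x₀| / |y - x₀| ^ α ≤ C

/-- `f` is `α`-Hölder at `x₀` from the left (within `[0,1]`). -/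
def HolderLeftAt (f : ℝ → ℝ) (α x₀ : ℝ) : Prop :=
  ∃ C : ℝ, ∀ᶠ y in nhdsWithin x₀ (Set.Ico 0 x₀), |f y - f x₀| / |y - x₀| ^ α ≤ C

/-- `f` is completely non-Hölder on `[0,1]`: at no point is it one-sided `α`-Hölder
for any `α ∈ (0,1]` (from the right at points `< 1`, from the left at points `> 0`). -/
def CompletelyNonHolder (f : ℝ → ℝ) : Prop :=
  ∀ x₀ ∈ Set.Icc (0 : ℝ) 1, ∀ α ∈ Set.Ioc (0 : ℝ) 1,
    (x₀ < 1 → ¬ HolderRightAt f α x₀) ∧ (0 < x₀ → ¬ HolderLeftAt f α x₀)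

/-- Core of the forward direction: along a punctured one-sided filter, if
`(P ∘ f - P (f x₀)) / (y - x₀)` tends to `0` for a non-constant polynomial `P`,
then `f` satisfies a `1/k`-Hölder bound along that filter. -/
lemma lemA (f : ℝ → ℝ) (x₀ : ℝ) (P : Polynomial ℝ) (hP : 0 < P.degree)
    (l : Filter ℝ) (hfc : Tendsto f l (nhds (f x₀))) (h_ne : ∀ᶠ y in l, y ≠ x₀)
    (ht : Tendsto (fun y => (P.eval (f y) - P.eval (f x₀)) / (y - x₀)) l (nhds 0)) :
    ∃ k : ℕ, 0 < k ∧ ∃ C, ∀ᶠ y in l, |f y - f x₀| / |y - x₀| ^ ((1:ℝ)/k) ≤ C := by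
  set c := f x₀ with hc
  set g : Polynomial ℝ := P - Polynomial.C (P.eval c) with hg
  have hg0 : g ≠ 0 := by
    intro h
    have : P = Polynomial.C (P.eval c) := sub_eq_zero.mp h
    rw [this] at hP
    exact absurd hP (not_lt.mpr Polynomial.degree_C_le)
  have hroot : g.IsRoot c := by simp [hg, Polynomial.IsRoot]
  set k := g.rootMultiplicity c with hk
  have hkpos : 0 < k := (Polynomial.rootMultiplicity_pos hg0).mpr hroot
  set q : Polynomial ℝ := g /ₘ (Polynomial.X - Polynomial.C c) ^ k with hq
  have hfact : (Polynomial.X - Polynomial.C c) ^ k * q = g :=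
    Polynomial.pow_mul_divByMonic_rootMultiplicity_eq g c
  have hqc : q.eval c ≠ 0 := Polynomial.eval_divByMonic_pow_rootMultiplicity_ne_zero c hg0
  set m : ℝ := |q.eval c| / 2 with hm
  have hmpos : 0 < m := by positivity
  have hqt : Tendsto (fun y => |q.eval (f y)|) l (nhds |q.eval c|) :=
    (q.continuous_aeval.continuousAt.tendsto.comp hfc).abs
  have hev1 : ∀ᶠ y in l, m < |q.eval (f y)| := by
    apply hqt.eventually_const_lt
    rw [hm]
    have : 0 < |q.eval c| := abs_pos.mpr hqc
    linarith
  have hev2 : ∀ᶠ y in l, |(P.eval (f y) - P.eval c) / (y - x₀)| ≤ 1 := by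
    have h0 := ht.abs
    simp only [abs_zero] at h0
    exact (h0.eventually_lt_const (by norm_num : (0:ℝ) < 1)).mono fun y hy => hy.le
  refine ⟨k, hkpos, (1/m) ^ ((1:ℝ)/k), ?_⟩
  filter_upwards [hev1, hev2, h_ne] with y h1 h2 hy
  have hb : 0 < |y - x₀| := abs_pos.mpr (sub_ne_zero.mpr hy)
  have hgev : P.eval (f y) - P.eval c = (f y - c)^k * q.eval (f y) := by
    have h3 := congrArg (Polynomial.eval (f y)) hfact
    simpa [hg] using h3.symm
  have hPle : |P.eval (f y) - P.eval c| ≤ |y - x₀| := by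
    rw [abs_div] at h2
    exact (div_le_one hb).mp h2
  have key : |f y - c| ^ k * m ≤ |y - x₀| := by
    calc |f y - c| ^ k * m ≤ |f y - c| ^ k * |q.eval (f y)| := by
          apply mul_le_mul_of_nonneg_left h1.le (by positivity)
      _ = |P.eval (f y) - P.eval c| := by rw [hgev, abs_mul, abs_pow]
      _ ≤ |y - x₀| := hPle
  set a := |f y - c| with hadef
  set b := |y - x₀| with hbdef
  have ha : 0 ≤ a := abs_nonneg _
  have hak : a ^ ((k:ℕ):ℝ) ≤ b / m := by
    rw [Real.rpow_natCast, le_div_iff₀ hmpos]; exact key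
  have hkne : ((k:ℕ):ℝ) ≠ 0 := by positivity
  have haa : a = (a ^ ((k:ℕ):ℝ)) ^ ((1:ℝ)/k) := by
    rw [← Real.rpow_mul ha, mul_one_div_cancel hkne, Real.rpow_one]
  have hle : a ≤ (b/m) ^ ((1:ℝ)/k) := by
    rw [haa]
    exact Real.rpow_le_rpow (Real.rpow_nonneg ha _) hak (by positivity)
  have hsplit : (b/m) ^ ((1:ℝ)/k) = b ^ ((1:ℝ)/k) * (1/m) ^ ((1:ℝ)/k) := by
    rw [div_eq_mul_one_div b m, Real.mul_rpow (abs_nonneg _) (by positivity)]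
  rw [div_le_iff₀ (Real.rpow_pos_of_pos hb _)]
  calc a ≤ (b/m) ^ ((1:ℝ)/k) := hle
    _ = (1/m) ^ ((1:ℝ)/k) * b ^ ((1:ℝ)/k) := by rw [hsplit]; ring

/-- Core of the reverse direction: a one-sided Hölder bound produces an `n` for which
`(f y - f x₀)^n / (y - x₀)` tends to `0` along the filter. -/
lemma lemB (f : ℝ → ℝ) (x₀ α C : ℝ) (hα : α ∈ Set.Ioc (0:ℝ) 1)
    (l : Filter ℝ) (hl : Tendsto (fun y => y) l (nhds x₀)) (h_ne : ∀ᶠ y in l, y ≠ x₀)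
    (hH : ∀ᶠ y in l, |f y - f x₀| / |y - x₀| ^ α ≤ C) :
    ∃ n : ℕ, 0 < n ∧ Tendsto (fun y => ((f y - f x₀)^n) / (y - x₀)) l (nhds 0) := by
  obtain ⟨hα0, hα1⟩ := hα
  set C' := max C 0 with hC'
  have hC'0 : 0 ≤ C' := le_max_right _ _
  set n : ℕ := ⌈1/α⌉₊ + 1 with hn
  have hn0 : 0 < n := Nat.succ_pos _
  have hna : 1 < (n:ℝ) * α := by
    have h1 : (1/α) ≤ (⌈1/α⌉₊ : ℝ) := Nat.le_ceil _
    have h2 : (1/α) < (n:ℝ) := by rw [hn]; push_cast; linarith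
    calc 1 = (1/α) * α := by field_simp
      _ < (n:ℝ) * α := mul_lt_mul_of_pos_right h2 hα0
  refine ⟨n, hn0, ?_⟩
  rw [tendsto_zero_iff_abs_tendsto_zero]
  have hbtend : Tendsto (fun y => |y - x₀|) l (nhds 0) := by
    have := (hl.sub_const x₀).abs
    simpa using this
  have hexp : (0:ℝ) < α * n - 1 := by rw [mul_comm]; linarith
  have hgtend : Tendsto (fun y => C'^n * |y - x₀| ^ (α * n - 1)) l (nhds 0) := by
    have h1 : Tendsto (fun y => |y - x₀| ^ (α * n - 1)) l (nhds 0) := by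
      have hcont := (Real.continuousAt_rpow_const 0 (α * n - 1) (Or.inr hexp.le)).tendsto
      have := hcont.comp hbtend
      simpa [Function.comp_def, Real.zero_rpow hexp.ne'] using this
    have := h1.const_mul (C'^n)
    simpa using this
  apply squeeze_zero' (Eventually.of_forall fun y => abs_nonneg _) _ hgtend
  filter_upwards [h_ne, hH] with y hy hHy
  have hb : 0 < |y - x₀| := abs_pos.mpr (sub_ne_zero.mpr hy)
  have hbα : 0 < |y - x₀| ^ α := Real.rpow_pos_of_pos hb _
  have h1 : |f y - f x₀| ≤ C' * |y - x₀| ^ α := by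
    have := le_trans hHy (le_max_left C 0)
    calc |f y - f x₀| = (|f y - f x₀| / |y - x₀| ^ α) * |y - x₀| ^ α := by
          field_simp
      _ ≤ C' * |y - x₀| ^ α := mul_le_mul_of_nonneg_right this hbα.le
  have h2 : |(f y - f x₀)^n / (y - x₀)| = |f y - f x₀|^n / |y - x₀| := by
    rw [abs_div, abs_pow]
  rw [h2]
  have h3 : |f y - f x₀|^n ≤ (C' * |y - x₀| ^ α)^n :=
    pow_le_pow_left₀ (abs_nonneg _) h1 n
  have h4 : (C' * |y - x₀| ^ α)^n = C'^n * |y - x₀| ^ (α * n) := by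
    rw [mul_pow, ← Real.rpow_natCast (|y - x₀| ^ α) n, ← Real.rpow_mul (abs_nonneg _)]
  have h5 : |y - x₀| ^ (α * n) / |y - x₀| = |y - x₀| ^ (α * n - 1) := by
    rw [Real.rpow_sub hb, Real.rpow_one]
  calc |f y - f x₀|^n / |y - x₀| ≤ (C'^n * |y - x₀| ^ (α * n)) / |y - x₀| := by
        gcongr
        rw [← h4]; exact h3
      _ = C'^n * |y - x₀| ^ (α * n - 1) := by rw [mul_div_assoc, h5]

lemma aux_ne_right (x₀ : ℝ) : ∀ᶠ y in nhdsWithin x₀ (Set.Ioc x₀ 1), y ≠ x₀ :=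
  eventually_mem_nhdsWithin.mono fun _ hy => hy.1.ne'

lemma aux_ne_left (x₀ : ℝ) : ∀ᶠ y in nhdsWithin x₀ (Set.Ico 0 x₀), y ≠ x₀ :=
  eventually_mem_nhdsWithin.mono fun _ hy => hy.2.ne

lemma deg_pow_pos (c : ℝ) (n : ℕ) (hn : 0 < n) :
    0 < ((Polynomial.X - Polynomial.C c)^n : Polynomial ℝ).degree := by
  rw [Polynomial.degree_pow, Polynomial.degree_X_sub_C]
  rw [nsmul_eq_mul, mul_one]
  exact_mod_cast hn

/-- a continuous `f` is completely non-Hölder iff for every non-constant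
polynomial `P`, at no point of `[0,1]` does `P ∘ f` have a one-sided derivative equal to `0`. -/
theorem stmt2 (f : ℝ → ℝ) (hf : ContinuousOn f (Set.Icc 0 1)) :
    CompletelyNonHolder f ↔
      ∀ P : Polynomial ℝ, 0 < P.degree → ∀ x₀ ∈ Set.Icc (0 : ℝ) 1,
        ¬ ((x₀ < 1 ∧ Tendsto (fun y => (P.eval (f y) - P.eval (f x₀)) / (y - x₀))
              (nhdsWithin x₀ (Set.Ioc x₀ 1)) (nhds 0)) ∨
           (0 < x₀ ∧ Tendsto (fun y => (P.eval (f y) - P.eval (f x₀)) / (y - x₀))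
              (nhdsWithin x₀ (Set.Ico 0 x₀)) (nhds 0))) := by
  constructor
  · intro hCNH P hP x₀ hx₀ h
    rcases h with ⟨hx1, ht⟩ | ⟨hx0, ht⟩
    · have hfc : Tendsto f (nhdsWithin x₀ (Set.Ioc x₀ 1)) (nhds (f x₀)) :=
        (hf x₀ hx₀).mono_left (nhdsWithin_mono _ (Set.Ioc_subset_Icc_self.trans
          (Set.Icc_subset_Icc hx₀.1 le_rfl)))
      obtain ⟨k, hk, C, hC⟩ := lemA f x₀ P hP _ hfc (aux_ne_right x₀) ht
      have hk1 : (1:ℝ) ≤ (k:ℝ) := by exact_mod_cast hk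
      exact (hCNH x₀ hx₀ ((1:ℝ)/k) ⟨by positivity,
        by rw [div_le_one (by positivity)]; exact hk1⟩).1 hx1 ⟨C, hC⟩
    · have hfc : Tendsto f (nhdsWithin x₀ (Set.Ico 0 x₀)) (nhds (f x₀)) :=
        (hf x₀ hx₀).mono_left (nhdsWithin_mono _ (Set.Ico_subset_Icc_self.trans
          (Set.Icc_subset_Icc le_rfl hx₀.2)))
      obtain ⟨k, hk, C, hC⟩ := lemA f x₀ P hP _ hfc (aux_ne_left x₀) ht
      have hk1 : (1:ℝ) ≤ (k:ℝ) := by exact_mod_cast hk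
      exact (hCNH x₀ hx₀ ((1:ℝ)/k) ⟨by positivity,
        by rw [div_le_one (by positivity)]; exact hk1⟩).2 hx0 ⟨C, hC⟩
  · intro hRHS x₀ hx₀ α hα
    constructor
    · intro hx1 hHR
      obtain ⟨C, hC⟩ := hHR
      obtain ⟨n, hn0, htend⟩ := lemB f x₀ α C hα _
        (tendsto_id.mono_left nhdsWithin_le_nhds) (aux_ne_right x₀) hC
      refine hRHS ((Polynomial.X - Polynomial.C (f x₀))^n) (deg_pow_pos _ _ hn0) x₀ hx₀
        (Or.inl ⟨hx1, ?_⟩)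
      have heq : ∀ y, (((Polynomial.X - Polynomial.C (f x₀))^n).eval (f y) -
          ((Polynomial.X - Polynomial.C (f x₀))^n).eval (f x₀)) = (f y - f x₀)^n := by
        intro y
        simp [zero_pow hn0.ne']
      simpa only [heq] using htend
    · intro hx0 hHL
      obtain ⟨C, hC⟩ := hHL
      obtain ⟨n, hn0, htend⟩ := lemB f x₀ α C hα _
        (tendsto_id.mono_left nhdsWithin_le_nhds) (aux_ne_left x₀) hC
      refine hRHS ((Polynomial.X - Polynomial.C (f x₀))^n) (deg_pow_pos _ _ hn0) x₀ hx₀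
        (Or.inr ⟨hx0, ?_⟩)
      have heq : ∀ y, (((Polynomial.X - Polynomial.C (f x₀))^n).eval (f y) -
          ((Polynomial.X - Polynomial.C (f x₀))^n).eval (f x₀)) = (f y - f x₀)^n := by
        intro y
        simp [zero_pow hn0.ne']
      simpa only [heq] using htend
end

section
/- The set of continuous functions f : [0,1] → ℝ that are NOT completely non-Hölder is meagre in C([0,1]) with the supremum metric. -/
open Filter Set Topology MeasureTheory ProbabilityTheory

/-- Extend a continuous function on `[0,1]` to `ℝ` via the projection onto `[0,1]`. -/
noncomputable def extIcc (f : C(↥(Set.Icc (0 : ℝ) 1), ℝ)) : ℝ → ℝ :=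
  fun x => f (Set.projIcc 0 1 zero_le_one x)

/-! ### Auxiliary material -/

abbrev I01 := ↥(Set.Icc (0 : ℝ) 1)

open Real

lemma continuous_extIcc_eval {q : I01 → ℝ} (hq : Continuous q) :
    Continuous fun p : I01 × C(I01, ℝ) => extIcc p.2 (q p.1) := by
  unfold extIcc
  have h1 : Continuous fun p : I01 × C(I01, ℝ) => (p.2, Set.projIcc (0:ℝ) 1 zero_le_one (q p.1)) :=
    continuous_snd.prodMk ((continuous_projIcc).comp (hq.comp continuous_fst))
  exact (continuous_eval (X := I01) (Y := ℝ)).comp h1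

lemma extIcc_uc (f : C(I01, ℝ)) : UniformContinuous (extIcc f) :=
  (CompactSpace.uniformContinuous_of_continuous f.continuous).comp
    (LipschitzWith.projIcc zero_le_one).uniformContinuous

lemma extIcc_of_mem (f : C(I01, ℝ)) {y : ℝ} (hy : y ∈ Set.Icc (0:ℝ) 1) :
    extIcc f y = f ⟨y, hy⟩ := by
  unfold extIcc
  rw [Set.projIcc_of_mem]

/-- The basic closed "one-sided Hölder with constant `C`, exponent `1/(k+1)`,
scale `1/(n+1)`" sets. -/
def holderSet (σ : ℝ) (k C n : ℕ) : Set C(I01, ℝ) :=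
  {f | ∃ x₀ : I01, (x₀ : ℝ) + σ / (n + 1) ∈ Set.Icc (0:ℝ) 1 ∧
    ∀ t ∈ Set.Ioo (0:ℝ) (1/(n+1)),
      |extIcc f ((x₀:ℝ) + σ * t) - extIcc f (x₀:ℝ)| ≤ C * t ^ (1 / ((k:ℝ) + 1))}

lemma holderSet_closed (σ : ℝ) (k C n : ℕ) : IsClosed (holderSet σ k C n) := by
  have himg : holderSet σ k C n = Prod.snd '' {p : I01 × C(I01, ℝ) |
      ((p.1 : ℝ) + σ / (n + 1) ∈ Set.Icc (0:ℝ) 1) ∧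
      ∀ t ∈ Set.Ioo (0:ℝ) (1/(n+1)),
        |extIcc p.2 ((p.1:ℝ) + σ * t) - extIcc p.2 (p.1:ℝ)| ≤ C * t ^ (1 / ((k:ℝ) + 1))} := by
    ext f
    constructor
    · rintro ⟨x₀, h1, h2⟩; exact ⟨(x₀, f), ⟨h1, h2⟩, rfl⟩
    · rintro ⟨⟨x₀, g⟩, ⟨h1, h2⟩, rfl⟩; exact ⟨x₀, h1, h2⟩
  rw [himg]
  apply isClosedMap_snd_of_compactSpace
  have h1c : IsClosed {p : I01 × C(I01, ℝ) | (p.1 : ℝ) + σ / (n + 1) ∈ Set.Icc (0:ℝ) 1} :=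
    isClosed_Icc.preimage (by fun_prop)
  have h2c : IsClosed {p : I01 × C(I01, ℝ) | ∀ t ∈ Set.Ioo (0:ℝ) (1/(n+1)),
      |extIcc p.2 ((p.1:ℝ) + σ * t) - extIcc p.2 (p.1:ℝ)| ≤ C * t ^ (1 / ((k:ℝ) + 1))} := by
    rw [show {p : I01 × C(I01, ℝ) | ∀ t ∈ Set.Ioo (0:ℝ) (1/(n+1)),
        |extIcc p.2 ((p.1:ℝ) + σ * t) - extIcc p.2 (p.1:ℝ)| ≤ C * t ^ (1 / ((k:ℝ) + 1))} =
      ⋂ t ∈ Set.Ioo (0:ℝ) (1/(n+1)), {p : I01 × C(I01, ℝ) |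
        |extIcc p.2 ((p.1:ℝ) + σ * t) - extIcc p.2 (p.1:ℝ)| ≤ C * t ^ (1 / ((k:ℝ) + 1))} by
      ext p; simp]
    refine isClosed_biInter fun t _ => ?_
    have hc : Continuous fun p : I01 × C(I01, ℝ) =>
        |extIcc p.2 ((p.1:ℝ) + σ * t) - extIcc p.2 (p.1:ℝ)| :=
      ((continuous_extIcc_eval (q := fun x₀ : I01 => (x₀:ℝ) + σ * t) (by fun_prop)).sub
        (continuous_extIcc_eval (q := fun x₀ : I01 => (x₀:ℝ)) continuous_subtype_val)).abs
    exact isClosed_le hc continuous_const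
  exact h1c.inter h2c

lemma exists_zero_point {σ : ℝ} (hσ : σ = 1 ∨ σ = -1) {m : ℕ} (hm : 0 < m) (x₀ : ℝ) :
    ∃ j : ℤ, 0 < σ * ((j : ℝ) / m - x₀) ∧ σ * ((j : ℝ) / m - x₀) ≤ 1 / m := by
  have hm' : (0:ℝ) < m := by exact_mod_cast hm
  rcases hσ with h | h
  · refine ⟨⌊(m : ℝ) * x₀⌋ + 1, ?_, ?_⟩ <;> subst h
    · have := Int.lt_floor_add_one ((m:ℝ) * x₀)
      rw [one_mul]
      have : x₀ < ((⌊(m : ℝ) * x₀⌋ + 1 : ℤ) : ℝ) / m := by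
        rw [lt_div_iff₀ hm']; push_cast; linarith
      linarith
    · have := Int.floor_le ((m:ℝ) * x₀)
      rw [one_mul]
      have : ((⌊(m : ℝ) * x₀⌋ + 1 : ℤ) : ℝ) / m ≤ x₀ + 1 / m := by
        have hinv : (m:ℝ) * (m:ℝ)⁻¹ = 1 := mul_inv_cancel₀ (by positivity)
        rw [div_le_iff₀ hm']; push_cast; ring_nf; nlinarith
      linarith
  · refine ⟨⌈(m : ℝ) * x₀⌉ - 1, ?_, ?_⟩ <;> subst h
    · have := Int.ceil_lt_add_one ((m:ℝ) * x₀)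
      have : ((⌈(m : ℝ) * x₀⌉ - 1 : ℤ) : ℝ) / m < x₀ := by
        rw [div_lt_iff₀ hm']; push_cast; linarith
      nlinarith
    · have := Int.le_ceil ((m:ℝ) * x₀)
      rw [mul_comm] at this
      have : x₀ - 1/m ≤ ((⌈(m : ℝ) * x₀⌉ - 1 : ℤ) : ℝ) / m := by
        have hinv : (m:ℝ) * (m:ℝ)⁻¹ = 1 := mul_inv_cancel₀ (by positivity)
        rw [le_div_iff₀ hm']; push_cast; ring_nf; nlinarith
      nlinarith

lemma saw_peak {σ : ℝ} (hσ : σ = 1 ∨ σ = -1) {m : ℕ} (hm : 0 < m) (j : ℤ) :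
    |Real.sin (π * m * ((j:ℝ)/m))| = 0 ∧
    |Real.sin (π * m * ((j:ℝ)/m + σ / (2*m)))| = 1 := by
  have hm' : ((m:ℝ)) ≠ 0 := by positivity
  constructor
  · rw [show π * m * ((j:ℝ)/m) = (j:ℝ) * π by field_simp]
    simp [Real.sin_int_mul_pi]
  · rw [show π * m * ((j:ℝ)/m + σ / (2*m)) = σ * (π/2) + (j:ℝ) * π by field_simp; ring]
    rw [Real.sin_add_int_mul_pi, abs_mul]
    have hj : |((-1:ℝ))^j| = 1 := by
      rcases Int.even_or_odd j with h|h
      · rw [h.neg_one_zpow]; simp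
      · rw [h.neg_one_zpow]; simp
    rcases hσ with h | h <;> subst h <;>
      simp [hj, Real.sin_pi_div_two, Real.sin_neg]

set_option maxHeartbeats 2000000 in
lemma holderSet_interior {σ : ℝ} (hσ : σ = 1 ∨ σ = -1) (k C n : ℕ) :
    interior (holderSet σ k C n) = ∅ := by
  rw [Set.eq_empty_iff_forall_notMem]
  intro f hf
  rw [mem_interior_iff_mem_nhds, Metric.mem_nhds_iff] at hf
  obtain ⟨ε, hε, hball⟩ := hf
  have hσ2 : σ * σ = 1 := by rcases hσ with h|h <;> rw [h] <;> norm_num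
  have hσa : |σ| = 1 := by rcases hσ with h|h <;> rw [h] <;> norm_num
  obtain ⟨δ, hδ, hδf⟩ := Metric.uniformContinuous_iff.mp (extIcc_uc f) (ε/16) (by positivity)
  set α : ℝ := 1 / ((k:ℝ) + 1) with hαdef
  have hα : 0 < α := by positivity
  set c : ℝ := ε / (16 * ((C:ℝ) + 1)) with hcdef
  have hc : 0 < c := by positivity
  set r : ℝ := min δ (min (1/((n:ℝ)+1)) (c ^ ((k:ℝ) + 1))) with hrdef
  have hr : 0 < r :=
    lt_min hδ (lt_min (by positivity) (Real.rpow_pos_of_pos hc _))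
  have hr_δ : r ≤ δ := min_le_left _ _
  have hr_n : r ≤ 1/((n:ℝ)+1) := (min_le_right _ _).trans (min_le_left _ _)
  have hr_c : r ≤ c ^ ((k:ℝ)+1) := (min_le_right _ _).trans (min_le_right _ _)
  obtain ⟨m, hm⟩ := exists_nat_gt (3 / (2 * r))
  have hm0 : (0:ℝ) < m := lt_trans (by positivity) hm
  have hmnat : 0 < m := by exact_mod_cast hm0
  have h32 : 3 / (2 * (m:ℝ)) < r := by
    rw [div_lt_iff₀ (by positivity)]
    rw [div_lt_iff₀ (by positivity)] at hm
    nlinarith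
  -- the sawtooth perturbation
  set wC : C(I01, ℝ) := ⟨fun x => |Real.sin (π * m * (x:ℝ))|, by fun_prop⟩ with hwC
  set g : C(I01, ℝ) := f + (ε/2) • wC with hg
  clear_value wC g
  have hgf : dist g f < ε := by
    have hle : dist g f ≤ ε/2 := by
      rw [ContinuousMap.dist_le (by positivity)]
      intro x
      have : g x - f x = (ε/2) * |Real.sin (π * m * (x:ℝ))| := by
        simp [hg, hwC]
      rw [Real.dist_eq, this, abs_mul, abs_of_nonneg (by positivity : (0:ℝ) ≤ ε/2)]
      have := abs_abs (Real.sin (π * m * (x:ℝ)))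
      nlinarith [Real.abs_sin_le_one (π * m * (x:ℝ)), abs_nonneg (Real.sin (π * m * (x:ℝ)))]
    linarith
  have hgmem : g ∈ holderSet σ k C n := hball (Metric.mem_ball.mpr hgf)
  obtain ⟨x₀, hx₁, h3⟩ := hgmem
  obtain ⟨j, hj1, hj2⟩ := exists_zero_point hσ hmnat (x₀:ℝ)
  set t₁ : ℝ := σ * ((j:ℝ)/m - (x₀:ℝ)) with ht₁def
  set t₂ : ℝ := t₁ + 1/(2*m) with ht₂def
  have hy₁ : (x₀:ℝ) + σ * t₁ = (j:ℝ)/m := by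
    have : σ * t₁ = (j:ℝ)/m - (x₀:ℝ) := by rw [ht₁def, ← mul_assoc, hσ2, one_mul]
    linarith
  have hy₂ : (x₀:ℝ) + σ * t₂ = (j:ℝ)/m + σ/(2*m) := by
    have h1 : σ * t₂ = σ * t₁ + σ * (1/(2*m)) := by rw [ht₂def]; ring
    have h2 : σ * t₁ = (j:ℝ)/m - (x₀:ℝ) := by rw [ht₁def, ← mul_assoc, hσ2, one_mul]
    rw [h1, h2]; ring
  have h1n : (3:ℝ)/(2*m) < 1/((n:ℝ)+1) := lt_of_lt_of_le h32 hr_n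
  have ht₁m : t₁ ≤ 3/(2*(m:ℝ)) := by
    have : (1:ℝ)/m ≤ 3/(2*m) := by rw [div_le_div_iff₀ (by positivity) (by positivity)]; nlinarith
    linarith
  have ht₂m : t₂ ≤ 3/(2*(m:ℝ)) := by
    rw [ht₂def]
    have : (1:ℝ)/m + 1/(2*m) = 3/(2*m) := by field_simp; ring
    linarith
  have ht₁ : t₁ ∈ Set.Ioo (0:ℝ) (1/((n:ℝ)+1)) := ⟨hj1, lt_of_le_of_lt ht₁m h1n⟩
  have ht₂ : t₂ ∈ Set.Ioo (0:ℝ) (1/((n:ℝ)+1)) :=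
    ⟨by rw [ht₂def]
        have h9 : (0:ℝ) < 1/(2*(m:ℝ)) := by positivity
        linarith, lt_of_le_of_lt ht₂m h1n⟩
  have hxIcc : (x₀:ℝ) ∈ Set.Icc (0:ℝ) 1 := x₀.2
  have hmem : ∀ t : ℝ, 0 ≤ t → t ≤ 1/((n:ℝ)+1) → (x₀:ℝ) + σ * t ∈ Set.Icc (0:ℝ) 1 := by
    intro t h1 h2
    have hx₁' := hx₁
    rw [Set.mem_Icc] at hx₁' hxIcc ⊢
    rcases hσ with h|h <;> rw [h] at hx₁' ⊢ <;>
      simp only [neg_div, one_mul, neg_one_mul] at hx₁' ⊢ <;>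
      constructor <;> linarith [hx₁'.1, hx₁'.2, hxIcc.1, hxIcc.2]
  have hgval : ∀ y : ℝ, ∀ hy : y ∈ Set.Icc (0:ℝ) 1,
      extIcc g y = extIcc f y + (ε/2) * |Real.sin (π * m * y)| := by
    intro y hy
    rw [extIcc_of_mem _ hy, extIcc_of_mem _ hy]
    simp [hg, hwC]
  -- key bound from membership
  have key : ∀ t ∈ Set.Ioo (0:ℝ) (1/((n:ℝ)+1)), t ≤ 3/(2*(m:ℝ)) →
      |extIcc g ((x₀:ℝ) + σ*t) - extIcc g (x₀:ℝ)| ≤ ε/16 := by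
    intro t ht hle
    refine (h3 t ht).trans ?_
    have h1 : t ^ α ≤ (3/(2*(m:ℝ))) ^ α :=
      Real.rpow_le_rpow (le_of_lt ht.1) hle (le_of_lt hα)
    have h2 : (3/(2*(m:ℝ))) ^ α < c := by
      have hlt : (3/(2*(m:ℝ))) < c ^ ((k:ℝ)+1) := lt_of_lt_of_le h32 hr_c
      have h4 := Real.rpow_lt_rpow (by positivity) hlt hα
      rwa [← Real.rpow_mul hc.le, mul_one_div, div_self (by positivity : ((k:ℝ)+1) ≠ 0),
        Real.rpow_one] at h4
    have h5 : (C:ℝ) * t ^ α ≤ (C:ℝ) * c :=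
      mul_le_mul_of_nonneg_left (h1.trans h2.le) (Nat.cast_nonneg C)
    have h6 : ((C:ℝ)+1) * c = ε/16 := by
      rw [hcdef]; field_simp
    have h7 : (C:ℝ) * c ≤ ((C:ℝ)+1) * c :=
      mul_le_mul_of_nonneg_right (by linarith) hc.le
    linarith
  have hA₁ := key t₁ ht₁ ht₁m
  have hA₂ := key t₂ ht₂ ht₂m
  have hy₁Icc : (x₀:ℝ) + σ*t₁ ∈ Set.Icc (0:ℝ) 1 := hmem t₁ hj1.le ht₁.2.le
  have hy₂Icc : (x₀:ℝ) + σ*t₂ ∈ Set.Icc (0:ℝ) 1 := hmem t₂ ht₂.1.le ht₂.2.le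
  -- values of g at the two special points
  have hW := saw_peak hσ hmnat j
  have hv₁ : extIcc g ((x₀:ℝ) + σ*t₁) = extIcc f ((x₀:ℝ) + σ*t₁) := by
    rw [hgval _ hy₁Icc, hy₁, hW.1]; ring
  have hv₂ : extIcc g ((x₀:ℝ) + σ*t₂) = extIcc f ((x₀:ℝ) + σ*t₂) + ε/2 := by
    rw [hgval _ hy₂Icc, hy₂, hW.2]; ring
  -- f moves little between the two points
  have hd : dist ((x₀:ℝ) + σ*t₂) ((x₀:ℝ) + σ*t₁) < δ := by
    rw [Real.dist_eq]
    have : ((x₀:ℝ) + σ*t₂) - ((x₀:ℝ) + σ*t₁) = σ * (1/(2*m)) := by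
      rw [ht₂def]; ring
    rw [this, abs_mul]
    rw [hσa, one_mul, abs_of_nonneg (by positivity : (0:ℝ) ≤ 1/(2*m))]
    have : (1:ℝ)/(2*m) ≤ 3/(2*m) := by
      rw [div_le_div_iff₀ (by positivity) (by positivity)]; nlinarith
    linarith
  have hf2 : |extIcc f ((x₀:ℝ) + σ*t₂) - extIcc f ((x₀:ℝ) + σ*t₁)| < ε/16 := by
    have := hδf hd
    rwa [Real.dist_eq] at this
  -- contradiction
  have htri : |extIcc g ((x₀:ℝ) + σ*t₂) - extIcc g ((x₀:ℝ) + σ*t₁)| ≤ ε/8 := by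
    have h7 : |extIcc g ((x₀:ℝ) + σ*t₂) - extIcc g ((x₀:ℝ) + σ*t₁)| ≤
        |extIcc g ((x₀:ℝ) + σ*t₂) - extIcc g (x₀:ℝ)| +
        |extIcc g ((x₀:ℝ) + σ*t₁) - extIcc g (x₀:ℝ)| := by
      calc |extIcc g ((x₀:ℝ) + σ*t₂) - extIcc g ((x₀:ℝ) + σ*t₁)|
          = |(extIcc g ((x₀:ℝ) + σ*t₂) - extIcc g (x₀:ℝ)) -
             (extIcc g ((x₀:ℝ) + σ*t₁) - extIcc g (x₀:ℝ))| := by congr 1; ring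
        _ ≤ _ := abs_sub _ _
    linarith
  rw [hv₂, hv₁] at htri
  rcases abs_le.mp htri with ⟨hl, hu⟩
  rcases abs_lt.mp hf2 with ⟨hl2, hu2⟩
  linarith

lemma covering :
    {f : C(I01, ℝ) | ¬ CompletelyNonHolder (extIcc f)} ⊆
      ⋃ q : Bool × ℕ × ℕ × ℕ, holderSet (if q.1 then 1 else -1) q.2.1 q.2.2.1 q.2.2.2 := by
  intro f hf
  simp only [Set.mem_setOf_eq, CompletelyNonHolder, not_forall] at hf
  obtain ⟨x₀, hx₀, α, hα, hbad⟩ := hf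
  rw [Set.mem_Icc] at hx₀
  set F := extIcc f with hF
  have main : ∀ b : Bool, ∀ C' δ : ℝ, 0 < δ →
      ((x₀:ℝ) + (if b then (1:ℝ) else -1) * δ ∈ Set.Icc (0:ℝ) 1) →
      (∀ t : ℝ, 0 < t → t < δ → |F (x₀ + (if b then (1:ℝ) else -1) * t) - F x₀| / t ^ α ≤ C') →
      f ∈ ⋃ q : Bool × ℕ × ℕ × ℕ,
        holderSet (if q.1 then 1 else -1) q.2.1 q.2.2.1 q.2.2.2 := by
    intro b C' δ hδ hmem hC'
    obtain ⟨k, hk⟩ := exists_nat_one_div_lt hα.1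
    obtain ⟨n, hn⟩ := exists_nat_one_div_lt hδ
    rw [Set.mem_iUnion]
    refine ⟨(b, k, ⌈max C' 0⌉₊, n), ⟨⟨x₀, ?_⟩, ?_, ?_⟩⟩
    · exact Set.mem_Icc.mpr hx₀
    · rw [Set.mem_Icc] at hmem ⊢
      have hpos : (0:ℝ) < 1/((n:ℝ)+1) := by positivity
      cases b <;> simp only [if_true, if_false, Bool.false_eq_true, one_mul, neg_one_mul,
        neg_div] at hmem ⊢ <;> constructor <;>
        linarith [hn.le, hx₀.1, hx₀.2, hmem.1, hmem.2]
    · intro t ht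
      obtain ⟨ht0, htn⟩ := ht
      have htδ : t < δ := lt_trans htn hn
      have hrat := hC' t ht0 htδ
      have htpow : (0:ℝ) < t ^ α := Real.rpow_pos_of_pos ht0 α
      have habs : |F (x₀ + (if b then (1:ℝ) else -1) * t) - F x₀| ≤ C' * t ^ α := by
        rw [div_le_iff₀ htpow] at hrat
        linarith
      have hC'le : C' ≤ max C' 0 := le_max_left _ _
      have hmax0 : (0:ℝ) ≤ max C' 0 := le_max_right _ _
      have hexp : t ^ α ≤ t ^ (1/((k:ℝ)+1)) := by
        apply Real.rpow_le_rpow_of_exponent_ge ht0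
        · have : 1/((n:ℝ)+1) ≤ 1 := by
            rw [div_le_one (by positivity)]; linarith [Nat.cast_nonneg (α := ℝ) n]
          linarith
        · exact hk.le
      have hceil : (max C' 0) ≤ (⌈max C' 0⌉₊ : ℝ) := Nat.le_ceil _
      have h1 : C' * t ^ α ≤ (max C' 0) * t ^ α :=
        mul_le_mul_of_nonneg_right hC'le htpow.le
      have h2 : (max C' 0) * t ^ α ≤ (max C' 0) * t ^ (1/((k:ℝ)+1)) :=
        mul_le_mul_of_nonneg_left hexp hmax0
      have h3 : (max C' 0) * t ^ (1/((k:ℝ)+1)) ≤ (⌈max C' 0⌉₊ : ℝ) * t ^ (1/((k:ℝ)+1)) :=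
        mul_le_mul_of_nonneg_right hceil (Real.rpow_pos_of_pos ht0 _).le
      calc |extIcc f (x₀ + (if b then (1:ℝ) else -1) * t) - extIcc f x₀|
          ≤ C' * t ^ α := habs
        _ ≤ _ := by linarith
  rw [not_and_or] at hbad
  rcases hbad with hbad | hbad
  · push_neg at hbad
    obtain ⟨hx₀1, C', hev⟩ := hbad
    rw [eventually_nhdsWithin_iff, Metric.eventually_nhds_iff] at hev
    obtain ⟨δ₀, hδ₀, hball⟩ := hev
    set δ : ℝ := min δ₀ (1 - x₀) with hδdef
    have hδpos : 0 < δ := lt_min hδ₀ (by linarith)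
    refine main true C' δ hδpos ?_ ?_
    · simp only [if_true, one_mul]
      constructor
      · linarith [hδpos.le, hx₀.1]
      · have : δ ≤ 1 - x₀ := min_le_right _ _
        linarith
    · intro t ht0 htδ
      simp only [if_true, one_mul]
      have hmemIoc : x₀ + t ∈ Set.Ioc x₀ 1 := by
        constructor
        · linarith
        · have : δ ≤ 1 - x₀ := min_le_right _ _
          linarith
      have hdist : dist (x₀ + t) x₀ < δ₀ := by
        rw [Real.dist_eq]
        have : |x₀ + t - x₀| = t := by rw [show x₀ + t - x₀ = t by ring, abs_of_pos ht0]
        rw [this]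
        have : δ ≤ δ₀ := min_le_left _ _
        linarith
      have := hball hdist hmemIoc
      have habs : |x₀ + t - x₀| = t := by rw [show x₀ + t - x₀ = t by ring, abs_of_pos ht0]
      rwa [habs] at this
  · push_neg at hbad
    obtain ⟨hx₀0, C', hev⟩ := hbad
    rw [eventually_nhdsWithin_iff, Metric.eventually_nhds_iff] at hev
    obtain ⟨δ₀, hδ₀, hball⟩ := hev
    set δ : ℝ := min δ₀ x₀ with hδdef
    have hδpos : 0 < δ := lt_min hδ₀ hx₀0
    refine main false C' δ hδpos ?_ ?_
    · simp only [Bool.false_eq_true, if_false, neg_one_mul]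
      constructor
      · have : δ ≤ x₀ := min_le_right _ _
        linarith
      · linarith [hδpos.le, hx₀.2]
    · intro t ht0 htδ
      simp only [Bool.false_eq_true, if_false, neg_one_mul]
      have hmemIco : x₀ + -t ∈ Set.Ico (0:ℝ) x₀ := by
        constructor
        · have : δ ≤ x₀ := min_le_right _ _
          linarith
        · linarith
      have hdist : dist (x₀ + -t) x₀ < δ₀ := by
        rw [Real.dist_eq]
        have : |x₀ + -t - x₀| = t := by
          rw [show x₀ + -t - x₀ = -t by ring, abs_neg, abs_of_pos ht0]
        rw [this]
        have : δ ≤ δ₀ := min_le_left _ _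
        linarith
      have := hball hdist hmemIco
      have habs : |x₀ + -t - x₀| = t := by
        rw [show x₀ + -t - x₀ = -t by ring, abs_neg, abs_of_pos ht0]
      rwa [habs] at this

/-- the set of continuous functions on `[0,1]` which are not completely
non-Hölder is meagre in `C([0,1])` (with the uniform topology). -/
theorem stmt4 :
    IsMeagre {f : C(↥(Set.Icc (0 : ℝ) 1), ℝ) | ¬ CompletelyNonHolder (extIcc f)} := by
  rw [isMeagre_iff_countable_union_isNowhereDense]
  refine ⟨Set.range (fun q : Bool × ℕ × ℕ × ℕ =>
    holderSet (if q.1 then 1 else -1) q.2.1 q.2.2.1 q.2.2.2), ?_, Set.countable_range _, ?_⟩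
  · rintro t ⟨q, rfl⟩
    exact ((holderSet_closed _ _ _ _).isNowhereDense_iff).mpr
      (holderSet_interior (by cases q.1 <;> simp) _ _ _)
  · rw [Set.sUnion_range]
    exact covering
end

section
/- Let 𝒜 ⊆ C([0,1]) be a closed subalgebra (closed under uniform convergence) containing a non-constant function, and let x₀ ∈ (0,1). Then 𝒜 contains a non-constant function f that is differentiable at x₀. -/
open Filter Set Topology MeasureTheory ProbabilityTheory

/-- a closed subalgebra of `C([0,1])` containing a non-constant function
contains, for any `x₀ ∈ (0,1)`, a non-constant function differentiable at `x₀`. -/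
theorem stmt6 (𝒜 : Subalgebra ℝ C(↥(Set.Icc (0 : ℝ) 1), ℝ))
    (hclosed : IsClosed (𝒜 : Set C(↥(Set.Icc (0 : ℝ) 1), ℝ)))
    (hnc : ∃ f ∈ 𝒜, ¬ ∃ c : ℝ, ∀ x, f x = c)
    (x₀ : ℝ) (hx₀ : x₀ ∈ Set.Ioo (0 : ℝ) 1) :
    ∃ f ∈ 𝒜, (¬ ∃ c : ℝ, ∀ x, f x = c) ∧ DifferentiableAt ℝ (extIcc f) x₀ := by
  obtain ⟨f, hf𝒜, hfnc⟩ := hnc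
  push_neg at hfnc
  have hx₀Icc : x₀ ∈ Set.Icc (0 : ℝ) 1 := ⟨hx₀.1.le, hx₀.2.le⟩
  set p₀ : ↥(Set.Icc (0 : ℝ) 1) := ⟨x₀, hx₀Icc⟩ with hp₀
  obtain ⟨b, hb⟩ := hfnc (f p₀)
  set c : ℝ := f p₀ with hc
  set s : ℝ := (f b - c)⁻¹ with hs
  have hne : f b - c ≠ 0 := sub_ne_zero.mpr hb
  -- the continuous bump-composition function
  have hHcont : Continuous (fun t : ℝ => max (s * (t - c) - 1/2) 0) := by
    fun_prop
  set H : C(ℝ, ℝ) := ⟨fun t => max (s * (t - c) - 1/2) 0, hHcont⟩ with hH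
  set fA : 𝒜 := ⟨f, hf𝒜⟩ with hfA
  set g : C(Set.Icc (-‖fA‖) ‖fA‖, ℝ) := H.restrict _ with hg
  set F : C(↥(Set.Icc (0 : ℝ) 1), ℝ) := g.comp (ContinuousMap.attachBound (f : C(_, ℝ))) with hF
  have hFapp : ∀ x, F x = max (s * (f x - c) - 1/2) 0 := fun x => rfl
  have hFmem : F ∈ 𝒜 :=
    Subalgebra.topologicalClosure_minimal le_rfl hclosed
      (ContinuousMap.comp_attachBound_mem_closure 𝒜 fA g)
  have hF0 : F p₀ = 0 := by
    rw [hFapp]; simp [hc]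
  have hFb : F b = 1/2 := by
    rw [hFapp, hs, inv_mul_cancel₀ hne]; norm_num
  refine ⟨F, hFmem, ?_, ?_⟩
  · rintro ⟨k, hk⟩
    have h2 := (hk b).trans (hk p₀).symm
    rw [hFb, hF0] at h2
    norm_num at h2
  · -- F is locally 0 near x₀
    have hφ : Continuous (fun x : ℝ => f (Set.projIcc 0 1 zero_le_one x)) :=
      f.continuous.comp continuous_projIcc
    have hproj : Set.projIcc 0 1 zero_le_one x₀ = p₀ := Set.projIcc_of_mem _ hx₀Icc
    have hU : IsOpen {x : ℝ | s * (f (Set.projIcc 0 1 zero_le_one x) - c) < 1/2} :=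
      isOpen_lt (continuous_const.mul (hφ.sub continuous_const)) continuous_const
    have hx₀U : x₀ ∈ {x : ℝ | s * (f (Set.projIcc 0 1 zero_le_one x) - c) < 1/2} := by
      simp [hproj, ← hc]
    have hEq : extIcc F =ᶠ[𝓝 x₀] fun _ => (0 : ℝ) := by
      filter_upwards [hU.mem_nhds hx₀U] with x hx
      simp only [extIcc, hFapp]
      exact max_eq_right (by linarith [hx])
    exact (differentiableAt_const (0:ℝ)).congr_of_eventuallyEq hEq
end

section
/- Let f : [0,1] → ℝ be continuous, non-constant, with f(x₀) = 0 for some x₀ ∈ (0,1). Define ω(t) = max{|f(x)| : |x - x₀| ≤ t, x ∈ [0,1]} + t for t ≥ 0. Then ω is continuous, strictly increasing, ω(0) = 0, and the function g(x) = (ω⁻¹(|f(x)|))² satisfies |g(x)| ≤ |x - x₀|² near x₀ and is differentiable at x₀ with derivative 0. -/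
open Filter Set Topology MeasureTheory ProbabilityTheory

/-- with `ω(t) = max{|f x| : x ∈ [0,1], |x - x₀| ≤ t} + t`, the function `ω` is
continuous and strictly increasing with `ω 0 = 0`, and for any left inverse `invω` of `ω` on
`[0,1]`, the function `g = (invω ∘ |f|)²` satisfies `|g x| ≤ (x - x₀)²` near `x₀` and is
differentiable at `x₀` with derivative `0`. -/
theorem stmt8 (f : ℝ → ℝ) (hf : ContinuousOn f (Set.Icc 0 1))
    (hnc : ¬ ∃ c : ℝ, ∀ x ∈ Set.Icc (0 : ℝ) 1, f x = c)
    (x₀ : ℝ) (hx₀ : x₀ ∈ Set.Ioo (0 : ℝ) 1) (hfx₀ : f x₀ = 0)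
    (ω : ℝ → ℝ)
    (hω : ∀ t, ω t = sSup ((fun x => |f x|) '' (Set.Icc 0 1 ∩ Set.Icc (x₀ - t) (x₀ + t))) + t) :
    ContinuousOn ω (Set.Ici 0) ∧ StrictMonoOn ω (Set.Ici 0) ∧ ω 0 = 0 ∧
      ∀ invω : ℝ → ℝ, (∀ t ∈ Set.Icc (0 : ℝ) 1, invω (ω t) = t) →
        (∀ᶠ x in nhds x₀, |(invω |f x|) ^ 2| ≤ (x - x₀) ^ 2) ∧
        HasDerivAt (fun x => (invω |f x|) ^ 2) 0 x₀ := by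

  obtain ⟨hx0, hx1⟩ := hx₀
  have hx₀m : x₀ ∈ Set.Icc (0:ℝ) 1 := ⟨hx0.le, hx1.le⟩
  set S : ℝ → Set ℝ := fun t => Set.Icc 0 1 ∩ Set.Icc (x₀ - t) (x₀ + t) with hS
  have habs : ContinuousOn (fun x => |f x|) (Set.Icc 0 1) := hf.abs
  have hScpt : ∀ t, IsCompact (S t) := fun t => isCompact_Icc.inter_right isClosed_Icc
  have hSsub : ∀ t, S t ⊆ Set.Icc 0 1 := fun t => Set.inter_subset_left
  have hSne : ∀ t, 0 ≤ t → x₀ ∈ S t := fun t ht => ⟨hx₀m, by constructor <;> linarith⟩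
  set m : ℝ → ℝ := fun t => sSup ((fun x => |f x|) '' S t) with hm
  have hbdd : ∀ t, BddAbove ((fun x => |f x|) '' S t) := fun t =>
    ((hScpt t).image_of_continuousOn (habs.mono (hSsub t))).bddAbove
  have homega : ω = fun t => m t + t := funext hω
  have hmono : ∀ s t, 0 ≤ s → s ≤ t → m s ≤ m t := by
    intro s t hs hst
    apply csSup_le_csSup (hbdd t) ⟨_, Set.mem_image_of_mem _ (hSne s hs)⟩
    apply Set.image_mono
    intro x hx
    exact ⟨hx.1, ⟨by linarith [hx.2.1], by linarith [hx.2.2]⟩⟩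
  have hflem : ∀ t, ∀ x ∈ S t, |f x| ≤ m t := fun t x hx =>
    le_csSup (hbdd t) (Set.mem_image_of_mem _ hx)
  have hm0 : m 0 = 0 := by
    have hS0 : S 0 = {x₀} := by
      simp only [hS, sub_zero, add_zero, Set.Icc_self]
      exact Set.inter_eq_self_of_subset_right (by simpa using hx₀m)
    simp [hm, hS0, hfx₀]
  have hω0 : ω 0 = 0 := by rw [hω]; simpa [hm, hS] using hm0
  -- uniform continuity of |f| on [0,1]
  have hUC : UniformContinuousOn (fun x => |f x|) (Set.Icc 0 1) :=
    isCompact_Icc.uniformContinuousOn_of_continuous habs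
  have key : ∀ ε > (0:ℝ), ∃ δ > (0:ℝ), ∀ s t, 0 ≤ s → s ≤ t → t - s < δ → m t ≤ m s + ε := by
    intro ε hε
    obtain ⟨δ, hδ, hδε⟩ := Metric.uniformContinuousOn_iff.mp hUC ε hε
    refine ⟨δ, hδ, fun s t hs hst hts => ?_⟩
    apply csSup_le ⟨_, Set.mem_image_of_mem _ (hSne t (hs.trans hst))⟩
    rintro v ⟨x, hx, rfl⟩
    obtain ⟨⟨hx0', hx1'⟩, hxl, hxr⟩ := hx
    -- clamp x into [x₀ - s, x₀ + s]
    set y := max (x₀ - s) (min x (x₀ + s)) with hy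
    have hys : y ∈ Set.Icc (x₀ - s) (x₀ + s) :=
      ⟨le_max_left _ _, max_le (by linarith) (min_le_right _ _)⟩
    have hcase : (x ≤ x₀ - s ∧ y = x₀ - s) ∨ (x₀ + s ≤ x ∧ y = x₀ + s) ∨ y = x := by
      rcases le_total x (x₀ - s) with h | h
      · exact Or.inl ⟨h, by rw [hy, min_eq_left (by linarith), max_eq_left h]⟩
      · rcases le_total (x₀ + s) x with h' | h'
        · exact Or.inr (Or.inl ⟨h', by rw [hy, min_eq_right h', max_eq_right (by linarith)]⟩)
        · exact Or.inr (Or.inr (by rw [hy, min_eq_left h', max_eq_right h]))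
    have hy01 : y ∈ Set.Icc (0:ℝ) 1 := by
      rcases hcase with ⟨h, hyv⟩ | ⟨h, hyv⟩ | hyv <;> rw [hyv] <;>
        constructor <;> linarith [hx₀m.1, hx₀m.2]
    have hxy : |x - y| ≤ t - s := by
      rcases hcase with ⟨h, hyv⟩ | ⟨h, hyv⟩ | hyv <;> rw [hyv, abs_le] <;>
        constructor <;> linarith
    have hd : dist (|f x|) (|f y|) < ε := by
      apply hδε x ⟨hx0', hx1'⟩ y hy01
      rw [Real.dist_eq]
      exact lt_of_le_of_lt hxy hts
    rw [Real.dist_eq] at hd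
    have h1 : |f y| ≤ m s := hflem s y ⟨hy01, hys⟩
    have := abs_lt.mp hd
    linarith
  have hmc : ContinuousOn m (Set.Ici 0) := by
    intro a ha
    rw [Metric.continuousWithinAt_iff]
    intro ε hε
    obtain ⟨δ, hδ, hkey⟩ := key (ε/2) (by linarith)
    refine ⟨δ, hδ, fun {t} ht hta => ?_⟩
    have ha0 : (0:ℝ) ≤ a := ha
    have ht0 : (0:ℝ) ≤ t := ht
    rw [Real.dist_eq] at hta ⊢
    have habs' := abs_lt.mp hta
    rcases le_total a t with h | h
    · have h1 := hmono a t ha0 h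
      have h2 := hkey a t ha0 h (by linarith)
      have : |m t - m a| ≤ ε/2 := abs_le.mpr ⟨by linarith, by linarith⟩
      linarith
    · have h1 := hmono t a ht0 h
      have h2 := hkey t a ht0 h (by linarith)
      have : |m t - m a| ≤ ε/2 := abs_le.mpr ⟨by linarith, by linarith⟩
      linarith
  have hωc : ContinuousOn ω (Set.Ici 0) := by
    rw [homega]; exact hmc.add (continuous_id.continuousOn)
  have hωsm : StrictMonoOn ω (Set.Ici 0) := by
    intro s hs t ht hst
    rw [homega]
    have := hmono s t hs hst.le
    simp only
    linarith
  refine ⟨hωc, hωsm, hω0, fun invω hinv => ?_⟩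
  -- eventual bound
  have hg0 : invω |f x₀| = 0 := by
    have h := hinv 0 ⟨le_refl 0, zero_le_one⟩
    rw [hω0] at h
    rw [hfx₀, abs_zero, h]
  have hbound : ∀ᶠ x in nhds x₀, |(invω |f x|) ^ 2| ≤ (x - x₀) ^ 2 := by
    filter_upwards [isOpen_Ioo.mem_nhds ⟨hx0, hx1⟩, Metric.ball_mem_nhds x₀ one_pos]
      with x hx hx1b
    have hx01 : x ∈ Set.Icc (0:ℝ) 1 := ⟨hx.1.le, hx.2.le⟩
    have hd1 : |x - x₀| < 1 := by rwa [Metric.mem_ball, Real.dist_eq] at hx1b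
    have hd0 : (0:ℝ) ≤ |x - x₀| := abs_nonneg _
    -- |f x| ∈ [ω 0, ω |x - x₀|]
    have hfub : |f x| ≤ ω |x - x₀| := by
      rw [hω]
      have : |f x| ≤ m |x - x₀| := by
        apply hflem
        refine ⟨hx01, ?_, ?_⟩ <;> [linarith [abs_le.mp (le_refl |x - x₀|) |>.1, neg_abs_le (x - x₀)]; linarith [le_abs_self (x - x₀)]]
      simp only [hm, hS] at this ⊢
      linarith
    obtain ⟨t, htmem, htval⟩ : ∃ t ∈ Set.Icc (0:ℝ) |x - x₀|, ω t = |f x| := by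
      have := intermediate_value_Icc hd0 (hωc.mono (fun u hu => hu.1 : Set.Icc 0 |x - x₀| ⊆ Set.Ici 0))
      exact this ⟨by rw [hω0]; exact abs_nonneg _, hfub⟩
    have hinvt : invω |f x| = t := by
      rw [← htval, hinv t ⟨htmem.1, htmem.2.trans hd1.le⟩]
    rw [hinvt, abs_of_nonneg (sq_nonneg t), ← sq_abs (x - x₀)]
    exact pow_le_pow_left₀ htmem.1 htmem.2 2
  refine ⟨hbound, ?_⟩
  rw [hasDerivAt_iff_isLittleO]
  have hgx0 : invω |f x₀| ^ 2 = 0 := by rw [hg0]; norm_num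
  simp only [hgx0, smul_zero, sub_zero]
  rw [Asymptotics.isLittleO_iff]
  intro c hc
  filter_upwards [hbound, Metric.ball_mem_nhds x₀ hc] with x hbx hcx
  rw [Metric.mem_ball, Real.dist_eq] at hcx
  rw [Real.norm_eq_abs, Real.norm_eq_abs]
  calc |(invω |f x|) ^ 2| ≤ (x - x₀)^2 := hbx
    _ = |x - x₀| * |x - x₀| := by rw [← sq_abs]; ring
    _ ≤ c * |x - x₀| := by nlinarith [abs_nonneg (x - x₀)]
end

section
/- Let σ : ℝ → ℝ be the tent function with σ(x) = 2x on [0,1/2], σ(x) = 2−2x on [1/2,1], and σ(x) = 0 outside [0,1], and set σ_{n,i}(x) = σ(2ⁿx − i). Let f(x) = Σ_{n≥0} Σ_{i=0}^{2ⁿ−1} γ_{n,i} σ_{n,i}(x) be a uniformly convergent Faber–Schauder series, δ_n = min_{0≤i≤2ⁿ−1} |γ_{n,i}|, and suppose limsup_n 2^{αn} δ_n = ∞ for some α ∈ (0,1]. Then at no point x₀ ∈ [0,1] is f α-Hölder from the right or from the left. -/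
open Filter Set Topology MeasureTheory ProbabilityTheory

/-- Partial sums of a Faber–Schauder series with coefficients `γ`. -/
noncomputable def fsPartial (γ : ℕ → ℕ → ℝ) (N : ℕ) (x : ℝ) : ℝ :=
  ∑ n ∈ Finset.range N, ∑ i ∈ Finset.range (2 ^ n), γ n i * fs n i x

lemma range_pow_nonempty (n : ℕ) : (Finset.range (2 ^ n)).Nonempty :=
  Finset.nonempty_range_iff.mpr (by positivity)

/-- `δ_n = min_{0 ≤ i ≤ 2ⁿ-1} |γ_{n,i}|`. -/
noncomputable def deltaCoef (γ : ℕ → ℕ → ℝ) (n : ℕ) : ℝ :=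
  (Finset.range (2 ^ n)).inf' (range_pow_nonempty n) fun i => |γ n i|

/-- `Δ_n = max_{0 ≤ i ≤ 2ⁿ-1} |γ_{n,i}|`. -/
noncomputable def DeltaCoef (γ : ℕ → ℕ → ℝ) (n : ℕ) : ℝ :=
  (Finset.range (2 ^ n)).sup' (range_pow_nonempty n) fun i => |γ n i|

set_option maxHeartbeats 1000000

lemma tent_nonpos {x : ℝ} (hx : x ≤ 0) : tent x = 0 := by simp [tent, hx]

lemma tent_one_le {x : ℝ} (hx : 1 ≤ x) : tent x = 0 := by simp [tent, hx]

lemma tent_left {x : ℝ} (h0 : 0 ≤ x) (h : x ≤ 1/2) : tent x = 2*x := by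
  unfold tent
  rcases eq_or_lt_of_le h0 with h0 | h0
  · simp [← h0]
  · rw [if_neg (by push_neg; constructor <;> linarith), if_pos h]

lemma tent_right {x : ℝ} (h0 : 1/2 ≤ x) (h : x ≤ 1) : tent x = 2 - 2*x := by
  unfold tent
  rcases eq_or_lt_of_le h with h1 | h1
  · rw [if_pos (Or.inr h1.ge)]; linarith
  · rw [if_neg (by push_neg; constructor <;> linarith)]
    rcases eq_or_lt_of_le h0 with h2 | h2
    · rw [if_pos h2.ge, ← h2]; norm_num
    · rw [if_neg (by linarith)]

lemma tent_int (J : ℤ) : tent (J : ℝ) = 0 := by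
  rcases le_or_gt J 0 with h | h
  · exact tent_nonpos (by exact_mod_cast h)
  · exact tent_one_le (by exact_mod_cast h)

lemma tent_int_half (K : ℤ) : tent ((K : ℝ) + 1/2) = if K = 0 then 1 else 0 := by
  rcases lt_trichotomy K 0 with h | h | h
  · rw [if_neg h.ne, tent_nonpos]
    have hk : K ≤ -1 := by omega
    have : (K : ℝ) ≤ -1 := by exact_mod_cast hk
    linarith
  · subst h; rw [if_pos rfl]
    rw [tent_left (by norm_num) (by norm_num)]; norm_num
  · rw [if_neg h.ne', tent_one_le]
    have : (1 : ℝ) ≤ K := by exact_mod_cast h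
    linarith

lemma tent_mid (J : ℤ) (k : ℕ) (hk : 1 ≤ k) :
    tent ((2*(J:ℝ)+1)/2^(k+1)) = (tent ((J:ℝ)/2^k) + tent (((J:ℝ)+1)/2^k))/2 := by
  obtain ⟨m, rfl⟩ : ∃ m, k = m + 1 := ⟨k - 1, by omega⟩
  have hP : ((2:ℤ)^(m+1) : ℝ) = 2^(m+1) := by push_cast; ring
  have hb : (0:ℝ) < 2^(m+1) := by positivity
  have hb2 : (0:ℝ) < 2^(m+1+1) := by positivity
  have h2b : (2:ℝ)^(m+1+1) = 2 * 2^(m+1) := by ring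
  rcases lt_or_ge J 0 with hJ | hJ0
  · have hJr : (J:ℝ) ≤ -1 := by exact_mod_cast (by omega : J ≤ -1)
    rw [tent_nonpos ((div_le_iff₀ hb2).mpr (by linarith)),
        tent_nonpos ((div_le_iff₀ hb).mpr (by linarith)),
        tent_nonpos ((div_le_iff₀ hb).mpr (by linarith))]
    norm_num
  rcases le_or_gt ((2:ℤ)^(m+1)) J with hge | hJu
  · have hJr : ((2:ℝ)^(m+1)) ≤ (J:ℝ) := by exact_mod_cast hge
    rw [tent_one_le ((le_div_iff₀ hb2).mpr (by nlinarith)),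
        tent_one_le ((le_div_iff₀ hb).mpr (by linarith)),
        tent_one_le ((le_div_iff₀ hb).mpr (by linarith))]
    norm_num
  have hJ0r : (0:ℝ) ≤ (J:ℝ) := by exact_mod_cast hJ0
  rcases le_or_gt (2*J+2) (2^(m+1)) with hc | hc
  · -- all in [0, 1/2]
    have hcr : 2*(J:ℝ)+2 ≤ 2^(m+1) := by exact_mod_cast hc
    rw [tent_left (by positivity) (by rw [div_le_div_iff₀ hb2 (by norm_num)]; linarith),
        tent_left (by positivity) (by rw [div_le_div_iff₀ hb (by norm_num)]; linarith),
        tent_left (by positivity) (by rw [div_le_div_iff₀ hb (by norm_num)]; linarith)]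
    field_simp
    ring
  · -- all in [1/2, 1] ; parity: 2^(m+1) = 2*2^m even, so 2^(m+1) ≤ 2J
    have hpar : (2:ℤ)^(m+1) ≤ 2*J := by
      have : (2:ℤ)^(m+1) = 2 * 2^m := by ring
      omega
    have hparr : (2:ℝ)^(m+1) ≤ 2*(J:ℝ) := by exact_mod_cast hpar
    have hJur : (J:ℝ) + 1 ≤ 2^(m+1) := by exact_mod_cast (by omega : J + 1 ≤ 2^(m+1))
    rw [tent_right (by rw [div_le_div_iff₀ (by norm_num) hb2]; linarith)
          ((div_le_one hb2).mpr (by linarith)),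
        tent_right (by rw [div_le_div_iff₀ (by norm_num) hb]; linarith)
          ((div_le_one hb).mpr (by linarith)),
        tent_right (by rw [div_le_div_iff₀ (by norm_num) hb]; linarith)
          ((div_le_one hb).mpr (by linarith))]
    field_simp
    ring

lemma fs_dyadic (n i m : ℕ) (hm : m ≤ n) (k : ℤ) : fs n i ((k:ℝ)/2^m) = 0 := by
  obtain ⟨d, rfl⟩ := Nat.exists_eq_add_of_le hm
  have h : (2:ℝ)^(m+d) * ((k:ℝ)/2^m) - i = ((k*2^d - i : ℤ) : ℝ) := by
    have : (0:ℝ) < 2^m := by positivity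
    push_cast
    field_simp
    ring
  rw [fs, h, tent_int]

lemma f_eq_fsPartial (γ : ℕ → ℕ → ℝ) (f : ℝ → ℝ)
    (hconv : TendstoUniformly (fsPartial γ) f atTop) (m : ℕ) (k : ℤ) :
    f ((k:ℝ)/2^m) = fsPartial γ m ((k:ℝ)/2^m) := by
  set x := (k:ℝ)/2^m with hx
  have hpt : Tendsto (fun N => fsPartial γ N x) atTop (𝓝 (f x)) := hconv.tendsto_at x
  have hconst : ∀ N, m ≤ N → fsPartial γ N x = fsPartial γ m x := by
    intro N hN
    induction N, hN using Nat.le_induction with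
    | base => rfl
    | succ N hN ih =>
      rw [fsPartial, Finset.sum_range_succ, ← fsPartial, ih]
      have : ∑ i ∈ Finset.range (2 ^ N), γ N i * fs N i x = 0 := by
        apply Finset.sum_eq_zero
        intro i _
        rw [hx, fs_dyadic N i m hN k, mul_zero]
      rw [this, add_zero]
  have hev : ∀ᶠ N in atTop, fsPartial γ m x = fsPartial γ N x := by
    filter_upwards [eventually_ge_atTop m] with N hN using (hconst N hN).symm
  exact tendsto_nhds_unique hpt (tendsto_const_nhds.congr' hev)

lemma fs_mid (n n' j i : ℕ) (hn' : n' < n) :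
    fs n' j ((2*(i:ℝ)+1)/2^(n+1)) = (fs n' j ((i:ℝ)/2^n) + fs n' j (((i:ℝ)+1)/2^n))/2 := by
  obtain ⟨k, hk1, rfl⟩ : ∃ k, 1 ≤ k ∧ n = n' + k := ⟨n - n', by omega, by omega⟩
  set J : ℤ := (i:ℤ) - (j:ℤ) * 2^k with hJ
  have hp : (0:ℝ) < 2^k := by positivity
  have hp' : (0:ℝ) < 2^n' := by positivity
  have h1 : (2:ℝ)^n' * ((i:ℝ)/2^(n'+k)) - j = (J:ℝ)/2^k := by
    rw [hJ]; push_cast; rw [pow_add]; field_simp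
  have h2 : (2:ℝ)^n' * (((i:ℝ)+1)/2^(n'+k)) - j = ((J:ℝ)+1)/2^k := by
    rw [hJ]; push_cast; rw [pow_add]; field_simp; ring
  have h3 : (2:ℝ)^n' * ((2*(i:ℝ)+1)/2^(n'+k+1)) - j = (2*(J:ℝ)+1)/2^(k+1) := by
    rw [hJ]; push_cast; rw [pow_add, pow_add]; field_simp; ring
  rw [fs, fs, fs, h1, h2, h3, tent_mid J k hk1]

lemma coef_eq (γ : ℕ → ℕ → ℝ) (f : ℝ → ℝ)
    (hconv : TendstoUniformly (fsPartial γ) f atTop) (n i : ℕ) (hi : i < 2^n) :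
    γ n i = f ((2*(i:ℝ)+1)/2^(n+1)) - (f ((i:ℝ)/2^n) + f (((i:ℝ)+1)/2^n)) / 2 := by
  have hb : (0:ℝ) < 2^n := by positivity
  have hmid : f ((2*(i:ℝ)+1)/2^(n+1)) = fsPartial γ (n+1) ((2*(i:ℝ)+1)/2^(n+1)) := by
    have := f_eq_fsPartial γ f hconv (n+1) (2*(i:ℤ)+1)
    push_cast at this ⊢
    exact this
  have hl : f ((i:ℝ)/2^n) = fsPartial γ n ((i:ℝ)/2^n) := by
    have := f_eq_fsPartial γ f hconv n (i:ℤ)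
    push_cast at this ⊢
    exact this
  have hr : f (((i:ℝ)+1)/2^n) = fsPartial γ n (((i:ℝ)+1)/2^n) := by
    have := f_eq_fsPartial γ f hconv n ((i:ℤ)+1)
    push_cast at this ⊢
    exact this
  have hstep : fsPartial γ (n+1) ((2*(i:ℝ)+1)/2^(n+1))
      = fsPartial γ n ((2*(i:ℝ)+1)/2^(n+1)) + γ n i := by
    rw [fsPartial, Finset.sum_range_succ, ← fsPartial]
    congr 1
    have hterm : ∀ j ∈ Finset.range (2^n),
        γ n j * fs n j ((2*(i:ℝ)+1)/2^(n+1)) = if j = i then γ n j else 0 := by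
      intro j _
      have harg : (2:ℝ)^n * ((2*(i:ℝ)+1)/2^(n+1)) - j = (((i:ℤ)-(j:ℤ) : ℤ):ℝ) + 1/2 := by
        push_cast
        rw [pow_succ]
        field_simp
        ring
      rw [fs, harg, tent_int_half]
      by_cases h : j = i
      · simp [h]
      · rw [if_neg (by omega), if_neg h, mul_zero]
    rw [Finset.sum_congr rfl hterm, Finset.sum_ite_eq' (Finset.range (2^n)) i,
        if_pos (Finset.mem_range.mpr hi)]
  have hlin : 2 * fsPartial γ n ((2*(i:ℝ)+1)/2^(n+1))
      = fsPartial γ n ((i:ℝ)/2^n) + fsPartial γ n (((i:ℝ)+1)/2^n) := by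
    rw [fsPartial, fsPartial, fsPartial, Finset.mul_sum, ← Finset.sum_add_distrib]
    apply Finset.sum_congr rfl
    intro n' hn'
    rw [Finset.mul_sum, ← Finset.sum_add_distrib]
    apply Finset.sum_congr rfl
    intro j _
    rw [fs_mid n n' j i (Finset.mem_range.mp hn')]
    ring
  rw [hmid, hstep, hl, hr]
  linarith

lemma delta_le (γ : ℕ → ℕ → ℝ) (n i : ℕ) (hi : i < 2^n) : deltaCoef γ n ≤ |γ n i| :=
  Finset.inf'_le _ (Finset.mem_range.mpr hi)

lemma gamma_bound (γ : ℕ → ℕ → ℝ) (f : ℝ → ℝ)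
    (hconv : TendstoUniformly (fsPartial γ) f atTop) (n i : ℕ) (hi : i < 2^n) (x₀ B : ℝ)
    (h1 : |f ((i:ℝ)/2^n) - f x₀| ≤ B)
    (h2 : |f (((i:ℝ)+1)/2^n) - f x₀| ≤ B)
    (h3 : |f ((2*(i:ℝ)+1)/2^(n+1)) - f x₀| ≤ B) :
    |γ n i| ≤ 2 * B := by
  have hc := coef_eq γ f hconv n i hi
  rw [abs_le] at h1 h2 h3 ⊢
  constructor <;> linarith [h1.1, h2.1, h3.2, h1.2, h2.2, h3.1]

lemma rpow_window (α : ℝ) (c : ℝ) (hc : 0 < c) (n : ℕ) :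
    (2:ℝ)^(α*(n:ℝ)) * (c/2^n)^α = c^α := by
  have hb : (0:ℝ) < 2^n := by positivity
  rw [mul_comm α, Real.rpow_mul (by norm_num), Real.rpow_natCast,
      ← Real.mul_rpow hb.le (by positivity)]
  congr 1
  field_simp

/-- if `f = Σ γ_{n,i} σ_{n,i}` converges uniformly and
`limsup 2^{αn} δ_n = ∞` for some `α ∈ (0,1]`, then `f` is at no point of `[0,1]`
`α`-Hölder from the right or from the left. -/
theorem stmt9 (γ : ℕ → ℕ → ℝ) (f : ℝ → ℝ)
    (hconv : TendstoUniformly (fsPartial γ) f atTop)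
    (α : ℝ) (hα : α ∈ Set.Ioc (0 : ℝ) 1)
    (hδ : ∀ C : ℝ, ∃ᶠ n : ℕ in atTop, C < (2 : ℝ) ^ (α * (n : ℝ)) * deltaCoef γ n) :
    ∀ x₀ ∈ Set.Icc (0 : ℝ) 1,
      (x₀ < 1 → ¬ HolderRightAt f α x₀) ∧ (0 < x₀ → ¬ HolderLeftAt f α x₀) := by
  obtain ⟨hα0, hα1⟩ := hα
  intro x₀ hx₀
  obtain ⟨hx0, hx1⟩ := hx₀
  have hsmall : ∀ e : ℝ, 0 < e → ∀ᶠ n : ℕ in atTop, (3:ℝ)/2^n < e := by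
    intro e he
    have h1 : Tendsto (fun n : ℕ => (3:ℝ) * (1/2)^n) atTop (𝓝 0) := by
      simpa using (tendsto_pow_atTop_nhds_zero_of_lt_one
        (by norm_num : (0:ℝ) ≤ 1/2) (by norm_num)).const_mul (3:ℝ)
    filter_upwards [h1.eventually (eventually_lt_nhds he)] with n hn
    calc (3:ℝ)/2^n = 3 * (1/2)^n := by rw [div_pow, one_pow]; ring
    _ < e := hn
  have hsp : ∀ d t : ℝ, 0 < d → (d*x₀ + t)/d = x₀ + t/d := by
    intro d t hd
    rw [add_div, mul_div_cancel_left₀ _ hd.ne']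
  have hsp2 : ∀ d t : ℝ, 0 < d → (d*x₀ - t)/d = x₀ - t/d := by
    intro d t hd
    rw [sub_div, mul_div_cancel_left₀ _ hd.ne']
  constructor
  · -- ===== right case =====
    intro hlt h
    obtain ⟨C, hC⟩ := h
    rw [eventually_iff, Metric.mem_nhdsWithin_iff] at hC
    obtain ⟨ε, hε, hsub⟩ := hC
    set M := max C 0 with hM
    have hM0 : 0 ≤ M := le_max_right _ _
    have key : ∀ y w : ℝ, x₀ < y → y ≤ 1 → y - x₀ < ε → y - x₀ ≤ w →
        |f y - f x₀| ≤ M * w ^ α := by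
      intro y w hy1 hy2 hy3 hy4
      have hyx : 0 < y - x₀ := by linarith
      have hbd := hsub ⟨by rw [Metric.mem_ball, Real.dist_eq, abs_of_pos hyx]; exact hy3,
        hy1, hy2⟩
      simp only [Set.mem_setOf_eq, abs_of_pos hyx] at hbd
      have hpow : (0:ℝ) < (y - x₀) ^ α := Real.rpow_pos_of_pos hyx α
      calc |f y - f x₀| ≤ C * (y - x₀) ^ α := (div_le_iff₀ hpow).mp hbd
        _ ≤ M * w ^ α := mul_le_mul (le_max_left _ _)
              (Real.rpow_le_rpow hyx.le hy4 hα0.le) hpow.le hM0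
    set e := min ε (1 - x₀) with he
    have he0 : 0 < e := lt_min hε (by linarith)
    obtain ⟨n, hn, hne⟩ := ((hδ (2*(M*(2:ℝ)^α))).and_eventually (hsmall e he0)).exists
    set b := (2:ℝ)^n with hbdef
    have hb : (0:ℝ) < b := by positivity
    have h2b0 : (0:ℝ) < 2*b := by positivity
    have h2b : (2:ℝ)/b < e := lt_of_le_of_lt (by gcongr; norm_num) hne
    set F := ⌊b * x₀⌋ with hF
    have hF0 : 0 ≤ F := Int.floor_nonneg.mpr (by positivity)
    have hFl : (F:ℝ) ≤ b * x₀ := Int.floor_le _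
    have hFu : b * x₀ < F + 1 := Int.lt_floor_add_one _
    have hwin : (2:ℝ)/b ≤ 1 - x₀ := le_trans h2b.le (min_le_right _ _)
    have hwe : (2:ℝ)/b < ε := lt_of_lt_of_le h2b (min_le_left _ _)
    have hbx2 : b*x₀ + 2 ≤ b := by
      have h' : 2 ≤ (1 - x₀) * b := (div_le_iff₀ hb).mp hwin
      nlinarith [h']
    have hcomm : x₀ * b = b * x₀ := mul_comm _ _
    set i : ℕ := (F+1).toNat with hi
    have hicast : ((i:ℤ)) = F + 1 := Int.toNat_of_nonneg (by omega)
    have hir : (i:ℝ) = (F:ℝ) + 1 := by exact_mod_cast congrArg (Int.cast : ℤ → ℝ) hicast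
    have hilt : i < 2^n := by
      have h1 : (i:ℝ) < ((2^n : ℕ) : ℝ) := by push_cast; rw [hir, ← hbdef]; linarith
      exact_mod_cast h1
    have hp2 : (2:ℝ)^(n+1) = 2*b := by rw [hbdef]; ring
    have h42 : (4:ℝ)/(2*b) = 2/b := by
      field_simp; ring
    have hw1 : (i:ℝ)/b ≤ x₀ + 2/b := by
      rw [← hsp b 2 hb]; exact div_le_div_of_nonneg_right (by linarith) hb.le
    have hw2 : ((i:ℝ)+1)/b ≤ x₀ + 2/b := by
      rw [← hsp b 2 hb]; exact div_le_div_of_nonneg_right (by linarith) hb.le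
    have hw3 : (2*(i:ℝ)+1)/(2*b) ≤ x₀ + 2/b := by
      rw [← h42, ← hsp (2*b) 4 h2b0]
      exact div_le_div_of_nonneg_right (by linarith) h2b0.le
    have hB1 : |f ((i:ℝ)/2^n) - f x₀| ≤ M * ((2:ℝ)/b) ^ α := by
      apply key
      · rw [lt_div_iff₀ hb]; linarith
      · rw [div_le_one hb]; linarith
      · linarith
      · linarith
    have hB2 : |f (((i:ℝ)+1)/2^n) - f x₀| ≤ M * ((2:ℝ)/b) ^ α := by
      apply key
      · rw [lt_div_iff₀ hb]; linarith
      · rw [div_le_one hb]; linarith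
      · linarith
      · linarith
    have hB3 : |f ((2*(i:ℝ)+1)/2^(n+1)) - f x₀| ≤ M * ((2:ℝ)/b) ^ α := by
      rw [hp2]
      apply key
      · rw [lt_div_iff₀ h2b0]; nlinarith [hcomm, hFu, hir]
      · rw [div_le_one h2b0]; linarith
      · linarith
      · linarith
    have hγ := gamma_bound γ f hconv n i hilt x₀ _ hB1 hB2 hB3
    have hδn : deltaCoef γ n ≤ 2*(M * ((2:ℝ)/b)^α) := (delta_le γ n i hilt).trans hγ
    have hfin : (2:ℝ)^(α*(n:ℝ)) * deltaCoef γ n ≤ 2*(M*(2:ℝ)^α) := by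
      calc (2:ℝ)^(α*(n:ℝ)) * deltaCoef γ n
          ≤ (2:ℝ)^(α*(n:ℝ)) * (2*(M * ((2:ℝ)/b)^α)) :=
            mul_le_mul_of_nonneg_left hδn (by positivity)
        _ = 2*M*((2:ℝ)^(α*(n:ℝ)) * ((2:ℝ)/b)^α) := by ring
        _ = 2*(M*(2:ℝ)^α) := by rw [hbdef, rpow_window α 2 (by norm_num) n]; ring
    linarith
  · -- ===== left case =====
    intro hgt h
    obtain ⟨C, hC⟩ := h
    rw [eventually_iff, Metric.mem_nhdsWithin_iff] at hC
    obtain ⟨ε, hε, hsub⟩ := hC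
    set M := max C 0 with hM
    have hM0 : 0 ≤ M := le_max_right _ _
    have key : ∀ y w : ℝ, 0 ≤ y → y < x₀ → x₀ - y < ε → x₀ - y ≤ w →
        |f y - f x₀| ≤ M * w ^ α := by
      intro y w hy1 hy2 hy3 hy4
      have hyx : 0 < x₀ - y := by linarith
      have habs : |y - x₀| = x₀ - y := by rw [abs_sub_comm, abs_of_pos hyx]
      have hbd := hsub ⟨by rw [Metric.mem_ball, Real.dist_eq, habs]; exact hy3, hy1, hy2⟩
      simp only [Set.mem_setOf_eq, habs] at hbd
      have hpow : (0:ℝ) < (x₀ - y) ^ α := Real.rpow_pos_of_pos hyx α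
      calc |f y - f x₀| ≤ C * (x₀ - y) ^ α := (div_le_iff₀ hpow).mp hbd
        _ ≤ M * w ^ α := mul_le_mul (le_max_left _ _)
              (Real.rpow_le_rpow hyx.le hy4 hα0.le) hpow.le hM0
    set e := min ε x₀ with he
    have he0 : 0 < e := lt_min hε hgt
    obtain ⟨n, hn, hne⟩ := ((hδ (2*(M*(3:ℝ)^α))).and_eventually (hsmall e he0)).exists
    set b := (2:ℝ)^n with hbdef
    have hb : (0:ℝ) < b := by positivity
    have h2b0 : (0:ℝ) < 2*b := by positivity
    set F := ⌊b * x₀⌋ with hF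
    have hFl : (F:ℝ) ≤ b * x₀ := Int.floor_le _
    have hFu : b * x₀ < F + 1 := Int.lt_floor_add_one _
    have hwe : (3:ℝ)/b < ε := lt_of_lt_of_le hne (min_le_left _ _)
    have hwx : (3:ℝ)/b ≤ x₀ := le_trans hne.le (min_le_right _ _)
    have h3bb : (3:ℝ) ≤ b * x₀ := by
      have h' : 3 ≤ x₀ * b := (div_le_iff₀ hb).mp hwx
      linarith [mul_comm x₀ b, h']
    have hcomm : x₀ * b = b * x₀ := mul_comm _ _
    have hF2 : 2 ≤ F := by
      have h2 : (2:ℝ) < (F:ℝ) := by linarith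
      exact_mod_cast h2.le
    set i : ℕ := (F-2).toNat with hi
    have hicast : ((i:ℤ)) = F - 2 := Int.toNat_of_nonneg (by omega)
    have hir : (i:ℝ) = (F:ℝ) - 2 := by exact_mod_cast congrArg (Int.cast : ℤ → ℝ) hicast
    have hilt : i < 2^n := by
      have hble : b * x₀ ≤ b := by nlinarith
      have h1 : (i:ℝ) < ((2^n : ℕ) : ℝ) := by push_cast; rw [hir, ← hbdef]; linarith
      exact_mod_cast h1
    have hp2 : (2:ℝ)^(n+1) = 2*b := by rw [hbdef]; ring
    have h62 : (6:ℝ)/(2*b) = 3/b := by field_simp; ring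
    have hw1 : x₀ - 3/b ≤ (i:ℝ)/b := by
      rw [← hsp2 b 3 hb]; exact div_le_div_of_nonneg_right (by linarith) hb.le
    have hw2 : x₀ - 3/b ≤ ((i:ℝ)+1)/b := by
      rw [← hsp2 b 3 hb]; exact div_le_div_of_nonneg_right (by linarith) hb.le
    have hw3 : x₀ - 3/b ≤ (2*(i:ℝ)+1)/(2*b) := by
      rw [← h62, ← hsp2 (2*b) 6 h2b0]
      exact div_le_div_of_nonneg_right (by linarith) h2b0.le
    have hB1 : |f ((i:ℝ)/2^n) - f x₀| ≤ M * ((3:ℝ)/b) ^ α := by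
      apply key
      · positivity
      · rw [div_lt_iff₀ hb]; linarith
      · linarith
      · linarith
    have hB2 : |f (((i:ℝ)+1)/2^n) - f x₀| ≤ M * ((3:ℝ)/b) ^ α := by
      apply key
      · positivity
      · rw [div_lt_iff₀ hb]; linarith
      · linarith
      · linarith
    have hB3 : |f ((2*(i:ℝ)+1)/2^(n+1)) - f x₀| ≤ M * ((3:ℝ)/b) ^ α := by
      rw [hp2]
      apply key
      · positivity
      · rw [div_lt_iff₀ h2b0]; nlinarith [hcomm, hFl, hir]
      · linarith
      · linarith
    have hγ := gamma_bound γ f hconv n i hilt x₀ _ hB1 hB2 hB3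
    have hδn : deltaCoef γ n ≤ 2*(M * ((3:ℝ)/b)^α) := (delta_le γ n i hilt).trans hγ
    have hfin : (2:ℝ)^(α*(n:ℝ)) * deltaCoef γ n ≤ 2*(M*(3:ℝ)^α) := by
      calc (2:ℝ)^(α*(n:ℝ)) * deltaCoef γ n
          ≤ (2:ℝ)^(α*(n:ℝ)) * (2*(M * ((3:ℝ)/b)^α)) :=
            mul_le_mul_of_nonneg_left hδn (by positivity)
        _ = 2*M*((2:ℝ)^(α*(n:ℝ)) * ((3:ℝ)/b)^α) := by ring
        _ = 2*(M*(3:ℝ)^α) := by rw [hbdef, rpow_window α 3 (by norm_num) n]; ring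
    linarith
end

section
/- The function f = Σ_{n≥0} (1/(n+1)²) Σ_{i=0}^{2ⁿ−1} σ_{n,i} is completely non-Hölder: for every x₀ ∈ [0,1] and every α ∈ (0,1], f is neither α-Hölder from the left nor from the right at x₀. -/
open Filter Set Topology MeasureTheory ProbabilityTheory

/-! ### Auxiliary lemmas -/

lemma tent_zero' {u : ℝ} (h : u ≤ 0 ∨ 1 ≤ u) : tent u = 0 := if_pos h

lemma tent_lo {u : ℝ} (h0 : 0 ≤ u) (h2 : u ≤ 1/2) : tent u = 2 * u := by
  rcases eq_or_lt_of_le h0 with h | h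
  · rw [tent_zero' (Or.inl h.symm.le)]; rw [← h]; ring
  · unfold tent
    rw [if_neg, if_pos h2]
    push_neg
    constructor <;> linarith

lemma tent_hi {u : ℝ} (h0 : 1/2 ≤ u) (h1 : u ≤ 1) : tent u = 2 - 2 * u := by
  rcases eq_or_lt_of_le h1 with h | h
  · rw [tent_zero' (Or.inr h.ge)]; rw [h]; ring
  · rcases eq_or_lt_of_le h0 with h' | h'
    · rw [tent_lo (by linarith) h'.ge, ← h']; norm_num
    · unfold tent
      rw [if_neg, if_neg (by linarith)]
      push_neg
      constructor <;> linarith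

lemma sA {r : ℕ} {t : ℝ} (h1 : (r:ℝ) ≤ t) (h2 : t ≤ r + 1/2) :
    tent (Int.fract t) = 2 * (t - r) := by
  have : Int.fract t = t - r := by
    rw [← Int.fract_sub_natCast t r]
    exact Int.fract_eq_self.mpr ⟨by linarith, by linarith⟩
  rw [this, tent_lo (by linarith) (by linarith)]

lemma sB {r : ℕ} {t : ℝ} (h1 : (r:ℝ) + 1/2 ≤ t) (h2 : t ≤ r + 1) :
    tent (Int.fract t) = 2 * ((r:ℝ) + 1 - t) := by
  rcases eq_or_lt_of_le h2 with h | h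
  · have : t = ((r+1 : ℕ) : ℝ) := by push_cast; linarith
    rw [this, Int.fract_natCast, tent_zero' (Or.inl le_rfl)]
    push_cast; ring
  · have hf : Int.fract t = t - r := by
      rw [← Int.fract_sub_natCast t r]
      exact Int.fract_eq_self.mpr ⟨by linarith, by linarith⟩
    rw [hf, tent_hi (by linarith) (by linarith)]
    ring

noncomputable def gfun (n : ℕ) (x : ℝ) : ℝ := ∑ i ∈ Finset.range (2^n), fs n i x

noncomputable def Ffun (x : ℝ) : ℝ := ∑' n : ℕ, (1 / ((n : ℝ) + 1) ^ 2) * gfun n x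

lemma gval (n : ℕ) {x : ℝ} (h0 : 0 ≤ x) (h1 : x ≤ 1) :
    gfun n x = tent (Int.fract ((2:ℝ)^n * x)) := by
  have ht0 : 0 ≤ (2:ℝ)^n * x := by positivity
  have htN : (2:ℝ)^n * x ≤ 2^n := by
    nlinarith [pow_pos (by norm_num : (0:ℝ) < 2) n]
  rcases eq_or_lt_of_le htN with he | hl
  · have hfr : Int.fract ((2:ℝ)^n * x) = 0 := by
      rw [he]
      have : ((2:ℝ))^n = ((2^n : ℕ) : ℝ) := by push_cast; ring
      rw [this, Int.fract_natCast]
    rw [hfr, tent_zero' (Or.inl le_rfl)]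
    apply Finset.sum_eq_zero
    intro i hi
    have hi' : (i:ℝ) ≤ (2:ℝ)^n - 1 := by
      have := Finset.mem_range.mp hi
      have : (i:ℝ) + 1 ≤ ((2^n : ℕ) : ℝ) := by exact_mod_cast this
      push_cast at this ⊢; linarith
    exact tent_zero' (Or.inr (by rw [he] at *; linarith))
  · set i₀ : ℕ := ⌊(2:ℝ)^n * x⌋.toNat with hi₀def
    have hfl : (0:ℤ) ≤ ⌊(2:ℝ)^n * x⌋ := Int.le_floor.mpr (by exact_mod_cast ht0)
    have hi₀ : (i₀ : ℝ) = ⌊(2:ℝ)^n * x⌋ := by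
      rw [hi₀def]; exact_mod_cast congrArg (Int.cast : ℤ → ℝ) (Int.toNat_of_nonneg hfl)
    have hle : (i₀:ℝ) ≤ (2:ℝ)^n * x := by rw [hi₀]; exact Int.floor_le _
    have hlt : (2:ℝ)^n * x < i₀ + 1 := by rw [hi₀]; exact Int.lt_floor_add_one _
    have hmem : i₀ ∈ Finset.range (2^n) := by
      rw [Finset.mem_range]
      have : (i₀:ℝ) < ((2^n : ℕ):ℝ) := by push_cast; linarith
      exact_mod_cast this
    rw [gfun, Finset.sum_eq_single i₀]
    · show tent ((2:ℝ)^n * x - i₀) = _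
      congr 1
      rw [Int.fract, hi₀]
    · intro i hi hne
      rcases lt_or_gt_of_ne hne with h | h
      · apply tent_zero' (Or.inr ?_)
        have : (i:ℝ) + 1 ≤ i₀ := by exact_mod_cast h
        show (1:ℝ) ≤ 2^n * x - i
        linarith
      · apply tent_zero' (Or.inl ?_)
        have : (i₀:ℝ) + 1 ≤ i := by exact_mod_cast h
        show (2:ℝ)^n * x - i ≤ 0
        linarith
    · intro h; exact absurd hmem h

lemma dyadic_mem {k m : ℕ} (hk : k ≤ 2^m) :
    0 ≤ (k:ℝ)/2^m ∧ (k:ℝ)/2^m ≤ 1 := by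
  constructor
  · positivity
  · rw [div_le_one (by positivity)]
    exact_mod_cast Nat.cast_le.mpr hk |>.trans_eq (by push_cast; ring)

lemma gfun_dyadic_zero {n m k : ℕ} (hmn : m ≤ n) (hk : k ≤ 2^m) :
    gfun n ((k:ℝ)/2^m) = 0 := by
  obtain ⟨h0, h1⟩ := dyadic_mem hk
  rw [gval n h0 h1]
  have h2 : (2:ℝ)^(n-m) * (2:ℝ)^m = 2^n := by
    rw [← pow_add, Nat.sub_add_cancel hmn]
  have : (2:ℝ)^n * ((k:ℝ)/2^m) = ((k * 2^(n-m) : ℕ) : ℝ) := by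
    push_cast
    field_simp
    nlinarith [h2]
  rw [this, Int.fract_natCast, tent_zero' (Or.inl le_rfl)]

lemma gfun_peak {m k : ℕ} (hk : k + 1 ≤ 2^m) :
    gfun m ((2*(k:ℝ)+1)/2^(m+1)) = 1 := by
  have hx : (2*(k:ℝ)+1)/2^(m+1) = ((2*k+1 : ℕ):ℝ)/2^(m+1) := by push_cast; ring
  have hk' : 2*k+1 ≤ 2^(m+1) := by rw [pow_succ]; omega
  obtain ⟨h0, h1⟩ := dyadic_mem hk'
  rw [hx, gval m h0 h1]
  have harg : (2:ℝ)^m * (((2*k+1 : ℕ):ℝ)/2^(m+1)) = 1/2 + (k:ℕ) := by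
    push_cast
    rw [pow_succ]
    field_simp
    ring
  rw [harg, Int.fract_add_natCast, Int.fract_eq_self.mpr (by norm_num)]
  rw [tent_lo (by norm_num) (by norm_num)]
  norm_num

set_option maxHeartbeats 2000000 in
lemma gfun_second_diff {n q k : ℕ} (hq : 1 ≤ q) (hk : k + 1 ≤ 2^(n+q)) :
    gfun n ((2*(k:ℝ)+1)/2^(n+q+1)) = (gfun n ((k:ℝ)/2^(n+q)) + gfun n (((k:ℝ)+1)/2^(n+q)))/2 := by
  set m := n + q with hm
  have hka : k ≤ 2^m := by omega
  have hkb : k + 1 ≤ 2^m := hk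
  have hkc : 2*k+1 ≤ 2^(m+1) := by rw [pow_succ]; omega
  obtain ⟨ha0, ha1⟩ := dyadic_mem hka
  obtain ⟨hb0, hb1⟩ := dyadic_mem hkb
  obtain ⟨hc0, hc1⟩ := dyadic_mem hkc
  have hb' : ((k:ℝ)+1)/2^m = (((k+1:ℕ)):ℝ)/2^m := by push_cast; ring
  have hc' : (2*(k:ℝ)+1)/2^(m+1) = (((2*k+1:ℕ)):ℝ)/2^(m+1) := by push_cast; ring
  rw [hb', hc']
  rw [gval n hc0 hc1, gval n ha0 ha1, gval n hb0 hb1]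
  have h2q : (2:ℝ)^q * (2:ℝ)^n = 2^m := by rw [← pow_add, hm, add_comm]
  have hta : (2:ℝ)^n * ((k:ℝ)/2^m) = (k:ℝ)/2^q := by
    field_simp
    nlinarith [h2q]
  have htb : (2:ℝ)^n * ((((k+1:ℕ)):ℝ)/2^m) = ((k:ℝ)+1)/2^q := by
    push_cast
    field_simp
    nlinarith [h2q]
  have htc : (2:ℝ)^n * ((((2*k+1:ℕ)):ℝ)/2^(m+1)) = (2*(k:ℝ)+1)/2^(q+1) := by
    push_cast
    have : (2:ℝ)^(m+1) = 2^(q+1) * 2^n := by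
      rw [← pow_add]; congr 1; omega
    rw [this]
    field_simp
  rw [hta, htb, htc]
  set j := k / 2^(q-1) with hj
  have hq' : 2^(q-1) * 2 = 2^q := by
    rw [← pow_succ]; congr 1; omega
  have hjl : j * 2^(q-1) ≤ k := Nat.div_mul_le_self k _
  have hjr : k < (j+1) * 2^(q-1) := (Nat.div_lt_iff_lt_mul (by positivity)).mp (Nat.lt_succ_self j)
  have hP : (0:ℝ) < 2^(q-1) := by positivity
  have hQ : (2:ℝ)^q = 2^(q-1) * 2 := by rw [← pow_succ]; congr 1; omega
  have hQ0 : (0:ℝ) < 2^q := by positivity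
  have hjlR : (j:ℝ) * 2^(q-1) ≤ k := by exact_mod_cast hjl
  have hjrR : (k:ℝ) + 1 ≤ ((j:ℝ)+1) * 2^(q-1) := by exact_mod_cast hjr
  have hA : (j:ℝ)/2 ≤ (k:ℝ)/2^q := by
    rw [div_le_div_iff₀ (by norm_num) hQ0, hQ]
    nlinarith
  have hB : ((k:ℝ)+1)/2^q ≤ ((j:ℝ)+1)/2 := by
    rw [div_le_div_iff₀ hQ0 (by norm_num), hQ]
    nlinarith
  have hab : (k:ℝ)/2^q ≤ ((k:ℝ)+1)/2^q := by
    gcongr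
    linarith
  have htc' : (2*(k:ℝ)+1)/2^(q+1) = ((k:ℝ)/2^q + ((k:ℝ)+1)/2^q)/2 := by
    rw [pow_succ]; field_simp; ring
  rw [htc']
  rcases Nat.even_or_odd j with ⟨r, hr⟩ | ⟨r, hr⟩
  · have hj2 : (j:ℝ)/2 = r := by rw [hr]; push_cast; ring
    have hj2' : ((j:ℝ)+1)/2 = (r:ℝ) + 1/2 := by rw [hr]; push_cast; ring
    rw [hj2] at hA; rw [hj2'] at hB
    have e1 : tent (Int.fract ((k:ℝ)/2^q)) = 2*((k:ℝ)/2^q - r) := sA (by linarith) (by linarith)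
    have e2 : tent (Int.fract (((k:ℝ)+1)/2^q)) = 2*(((k:ℝ)+1)/2^q - r) := sA (by linarith) (by linarith)
    have e3 : tent (Int.fract (((k:ℝ)/2^q + ((k:ℝ)+1)/2^q)/2)) = 2*(((k:ℝ)/2^q + ((k:ℝ)+1)/2^q)/2 - r) := sA (by linarith) (by linarith)
    rw [e1, e2, e3]
    ring
  · have hj2 : (j:ℝ)/2 = (r:ℝ) + 1/2 := by rw [hr]; push_cast; ring
    have hj2' : ((j:ℝ)+1)/2 = (r:ℝ) + 1 := by rw [hr]; push_cast; ring
    rw [hj2] at hA; rw [hj2'] at hB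
    have e1 : tent (Int.fract ((k:ℝ)/2^q)) = 2*((r:ℝ) + 1 - (k:ℝ)/2^q) := sB (by linarith) (by linarith)
    have e2 : tent (Int.fract (((k:ℝ)+1)/2^q)) = 2*((r:ℝ) + 1 - ((k:ℝ)+1)/2^q) := sB (by linarith) (by linarith)
    have e3 : tent (Int.fract (((k:ℝ)/2^q + ((k:ℝ)+1)/2^q)/2)) = 2*((r:ℝ) + 1 - ((k:ℝ)/2^q + ((k:ℝ)+1)/2^q)/2) := sB (by linarith) (by linarith)
    rw [e1, e2, e3]
    ring

lemma key {m k : ℕ} (hk : k + 1 ≤ 2^m) :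
    Ffun ((2*(k:ℝ)+1)/2^(m+1)) - (Ffun ((k:ℝ)/2^m) + Ffun (((k:ℝ)+1)/2^m))/2
      = 1/((m:ℝ)+1)^2 := by
  have hca : Ffun ((k:ℝ)/2^m) = ∑ n ∈ Finset.range (m+1),
      (1/((n:ℝ)+1)^2) * gfun n ((k:ℝ)/2^m) := by
    apply tsum_eq_sum
    intro n hn
    rw [gfun_dyadic_zero (by simp at hn; omega) (by omega), mul_zero]
  have hcb : Ffun (((k:ℝ)+1)/2^m) = ∑ n ∈ Finset.range (m+1),
      (1/((n:ℝ)+1)^2) * gfun n (((k:ℝ)+1)/2^m) := by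
    apply tsum_eq_sum
    intro n hn
    have hcast : ((k:ℝ)+1)/2^m = (((k+1:ℕ)):ℝ)/2^m := by push_cast; ring
    rw [hcast, gfun_dyadic_zero (by simp at hn; omega) hk, mul_zero]
  have hcc : Ffun ((2*(k:ℝ)+1)/2^(m+1)) = ∑ n ∈ Finset.range (m+1),
      (1/((n:ℝ)+1)^2) * gfun n ((2*(k:ℝ)+1)/2^(m+1)) := by
    apply tsum_eq_sum
    intro n hn
    have hcast : (2*(k:ℝ)+1)/2^(m+1) = (((2*k+1:ℕ)):ℝ)/2^(m+1) := by push_cast; ring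
    have hk' : 2*k+1 ≤ 2^(m+1) := by rw [pow_succ]; omega
    rw [hcast, gfun_dyadic_zero (by simp at hn; omega) hk', mul_zero]
  rw [hca, hcb, hcc, ← Finset.sum_add_distrib, Finset.sum_div, ← Finset.sum_sub_distrib]
  have hterm : ∀ n ∈ Finset.range m,
      (1/((n:ℝ)+1)^2) * gfun n ((2*(k:ℝ)+1)/2^(m+1))
        - ((1/((n:ℝ)+1)^2) * gfun n ((k:ℝ)/2^m) + (1/((n:ℝ)+1)^2) * gfun n (((k:ℝ)+1)/2^m))/2 = 0 := by
    intro n hn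
    have hn' : n < m := Finset.mem_range.mp hn
    have hnm : n + (m - n) = m := by omega
    have hk2 : k + 1 ≤ 2^(n + (m-n)) := by rw [hnm]; exact hk
    have hsd := gfun_second_diff (q := m - n) (by omega) hk2
    rw [hnm] at hsd
    rw [hsd]
    ring
  rw [Finset.sum_range_succ, Finset.sum_eq_zero hterm, zero_add]
  rw [gfun_peak hk, gfun_dyadic_zero le_rfl (by omega)]
  have hcast : ((k:ℝ)+1)/2^m = (((k+1:ℕ)):ℝ)/2^m := by push_cast; ring
  rw [hcast, gfun_dyadic_zero le_rfl hk]
  ring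

lemma bound_step {u v C d h α : ℝ} (hd : 0 < d) (hdh : d ≤ h) (hα0 : 0 < α)
    (hC : 0 ≤ C) (hP : |u - v| / d ^ α ≤ C) : |u - v| ≤ C * h ^ α := by
  rw [div_le_iff₀ (Real.rpow_pos_of_pos hd α)] at hP
  exact hP.trans (mul_le_mul_of_nonneg_left (Real.rpow_le_rpow hd.le hdh hα0.le) hC)

lemma rpow_bound {α : ℝ} (m : ℕ) (hα0 : 0 < α) (hα1 : α ≤ 1) :
    (2*(1/2:ℝ)^m) ^ α ≤ 2 * ((1/2:ℝ)^α)^m := by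
  have h1 : (2*(1/2:ℝ)^m) ^ α = (2:ℝ)^α * ((1/2:ℝ)^m)^α :=
    Real.mul_rpow (by norm_num) (by positivity)
  have h2 : ((1/2:ℝ)^m : ℝ)^α = ((1/2:ℝ)^α)^m := by
    rw [← Real.rpow_natCast (1/2:ℝ) m, ← Real.rpow_natCast ((1/2:ℝ)^α) m,
        ← Real.rpow_mul (by norm_num), ← Real.rpow_mul (by norm_num), mul_comm]
  have h3 : (2:ℝ)^α ≤ 2 := by
    calc (2:ℝ)^α ≤ (2:ℝ)^(1:ℝ) := Real.rpow_le_rpow_of_exponent_le (by norm_num) hα1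
    _ = 2 := Real.rpow_one 2
  have h4 : (0:ℝ) ≤ ((1/2:ℝ)^α)^m := by positivity
  rw [h1, h2]
  nlinarith

lemma punchline {α C x₀ : ℝ} {m k : ℕ} (hα0 : 0 < α) (hα1 : α ≤ 1) (hC : 0 ≤ C)
    (hk : k + 1 ≤ 2^m)
    (hba : |Ffun ((k:ℝ)/2^m) - Ffun x₀| ≤ C * (2*(1/2:ℝ)^m) ^ α)
    (hbb : |Ffun (((k:ℝ)+1)/2^m) - Ffun x₀| ≤ C * (2*(1/2:ℝ)^m) ^ α)
    (hbc : |Ffun ((2*(k:ℝ)+1)/2^(m+1)) - Ffun x₀| ≤ C * (2*(1/2:ℝ)^m) ^ α)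
    (hsmall : ((m:ℝ)+1)^2 * ((1/2:ℝ)^α)^m * (4*C+4) < 1) : False := by
  have hkey := key (k := k) hk
  have hr := rpow_bound m hα0 hα1
  have hCr := mul_le_mul_of_nonneg_left hr hC
  have la := (neg_le_abs _).trans hba
  have lb := (neg_le_abs _).trans hbb
  have lc := (le_abs_self _).trans hbc
  have hmain : 1/((m:ℝ)+1)^2 ≤ 2 * (C * (2*(1/2:ℝ)^m) ^ α) := by linarith
  have h4 : 1/((m:ℝ)+1)^2 ≤ 2 * (C * (2 * ((1/2:ℝ)^α)^m)) := by linarith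
  have hm2 : (0:ℝ) < ((m:ℝ)+1)^2 := by positivity
  have hrm : (0:ℝ) ≤ ((1/2:ℝ)^α)^m := by positivity
  have h5 := mul_le_mul_of_nonneg_left h4 hm2.le
  have h6 : ((m:ℝ)+1)^2 * (1/((m:ℝ)+1)^2) = 1 := by field_simp
  nlinarith

set_option maxHeartbeats 2000000 in
/-- the function `f = Σ_{n≥0} (n+1)^{-2} Σ_i σ_{n,i}` is completely
non-Hölder. -/
theorem stmt11 :
    CompletelyNonHolder
      (fun x => ∑' n : ℕ, (1 / ((n : ℝ) + 1) ^ 2) * ∑ i ∈ Finset.range (2 ^ n), fs n i x) := by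
  have hFF : (fun x => ∑' n : ℕ, (1 / ((n : ℝ) + 1) ^ 2) * ∑ i ∈ Finset.range (2 ^ n), fs n i x)
      = Ffun := rfl
  rw [hFF]
  rintro x₀ ⟨hx₀0, hx₀1⟩ α ⟨hα0, hα1⟩
  -- common limit facts
  have hr1 : ((1/2:ℝ)^α) < 1 := Real.rpow_lt_one (by norm_num) (by norm_num) hα0
  have hr0 : (0:ℝ) < (1/2:ℝ)^α := Real.rpow_pos_of_pos (by norm_num) α
  have htend : Tendsto (fun m:ℕ => 2*(1/2:ℝ)^m) atTop (nhds 0) := by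
    have := tendsto_pow_atTop_nhds_zero_of_lt_one (by norm_num : (0:ℝ) ≤ 1/2) (by norm_num)
    simpa using this.const_mul 2
  have htend2 : ∀ C : ℝ, Tendsto (fun m:ℕ => ((m:ℝ)+1)^2 * ((1/2:ℝ)^α)^m * (4*C+4)) atTop (nhds 0) := by
    intro C
    have hgeo := tendsto_pow_const_mul_const_pow_of_abs_lt_one 2 (r := (1/2:ℝ)^α)
      (by rw [abs_of_pos hr0]; exact hr1)
    have h2 := (hgeo.comp (tendsto_add_atTop_nat 1)).mul_const ((((1/2:ℝ)^α))⁻¹ * (4*C+4))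
    rw [zero_mul] at h2
    apply h2.congr
    intro m
    simp only [Function.comp]
    push_cast
    field_simp
    ring
  have hhalfpos : ∀ m : ℕ, (0:ℝ) < (1/2:ℝ)^m := fun m => by positivity
  have hhalfmul : ∀ m : ℕ, (1/2:ℝ)^m * 2^m = 1 := by
    intro m
    rw [div_pow, one_pow, div_mul_cancel₀]
    positivity
  constructor
  · -- right case
    intro hx1 hH
    obtain ⟨C, hC⟩ := hH
    rw [Filter.eventually_iff, Metric.mem_nhdsWithin_iff] at hC
    obtain ⟨δ, hδ, hsub⟩ := hC
    obtain ⟨m, hm1, hm2, hm3⟩ :=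
      ((htend.eventually_lt_const hδ).and
        ((htend.eventually_lt_const (by linarith : (0:ℝ) < 1 - x₀)).and
          ((htend2 C).eventually_lt_const (by norm_num : (0:ℝ) < 1)))).exists
    have hP2 : (0:ℝ) < (2:ℝ)^m := by positivity
    set t : ℝ := (2:ℝ)^m * x₀ with htdef
    have hfl0 : (0:ℤ) ≤ ⌊t⌋ := Int.floor_nonneg.mpr (by positivity)
    obtain ⟨k, hkR⟩ : ∃ k : ℕ, (k:ℝ) = (⌊t⌋:ℝ) + 1 := by
      refine ⟨⌊t⌋.toNat + 1, ?_⟩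
      have h1 : ((⌊t⌋.toNat : ℕ) : ℝ) = ((⌊t⌋ : ℤ) : ℝ) := by
        exact_mod_cast congrArg (Int.cast : ℤ → ℝ) (Int.toNat_of_nonneg hfl0)
      rw [Nat.cast_add, Nat.cast_one, h1]
    have hmul := hhalfmul m
    have hflle : (⌊t⌋:ℝ) ≤ t := Int.floor_le t
    have hfllt : t < (⌊t⌋:ℝ) + 1 := Int.lt_floor_add_one t
    have hx₀a : x₀ < (k:ℝ)/2^m := by
      rw [lt_div_iff₀ hP2, hkR]
      nlinarith
    have ha_le : (k:ℝ)/2^m ≤ x₀ + (1/2:ℝ)^m := by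
      rw [div_le_iff₀ hP2, hkR]
      nlinarith
    have hb_le : ((k:ℝ)+1)/2^m ≤ x₀ + 2*(1/2:ℝ)^m := by
      rw [div_le_iff₀ hP2, hkR]
      nlinarith
    have hb1 : ((k:ℝ)+1)/2^m ≤ 1 := hb_le.trans (by linarith)
    have hkN : k + 1 ≤ 2^m := by
      have h' : (k:ℝ)+1 ≤ 2^m := (div_le_one hP2).mp hb1
      have : ((k+1:ℕ):ℝ) ≤ ((2^m:ℕ):ℝ) := by push_cast; linarith
      exact_mod_cast this
    have hcmid : (2*(k:ℝ)+1)/2^(m+1) = ((k:ℝ)/2^m + ((k:ℝ)+1)/2^m)/2 := by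
      rw [pow_succ]; field_simp; ring
    have hab : (k:ℝ)/2^m < ((k:ℝ)+1)/2^m := by
      gcongr
      linarith
    -- bounds for the three points
    have hbound : ∀ y : ℝ, x₀ < y → y ≤ ((k:ℝ)+1)/2^m →
        |Ffun y - Ffun x₀| / |y - x₀| ^ α ≤ C ∧ 0 < y - x₀ ∧ y - x₀ ≤ 2*(1/2:ℝ)^m := by
      intro y hy1 hy2
      have hyd : y - x₀ ≤ 2*(1/2:ℝ)^m := by linarith
      have hy3 : y ≤ 1 := by linarith
      have hmem : y ∈ Metric.ball x₀ δ ∩ Set.Ioc x₀ 1 := by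
        constructor
        · rw [Metric.mem_ball, Real.dist_eq, abs_of_pos (by linarith : (0:ℝ) < y - x₀)]
          linarith
        · exact ⟨hy1, hy3⟩
      exact ⟨hsub hmem, by linarith, hyd⟩
    obtain ⟨hPa, hda, hda'⟩ := hbound _ hx₀a hab.le
    obtain ⟨hPb, hdb, hdb'⟩ := hbound _ (hx₀a.trans hab) le_rfl
    have hcx : x₀ < (2*(k:ℝ)+1)/2^(m+1) := by rw [hcmid]; linarith
    have hcble : (2*(k:ℝ)+1)/2^(m+1) ≤ ((k:ℝ)+1)/2^m := by rw [hcmid]; linarith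
    obtain ⟨hPc, hdc, hdc'⟩ := hbound _ hcx hcble
    have hC0 : 0 ≤ C :=
      le_trans (div_nonneg (abs_nonneg _) (Real.rpow_nonneg (abs_nonneg _) α)) hPa
    exact punchline hα0 hα1 hC0 hkN
      (bound_step hda hda' hα0 hC0 (by rwa [abs_of_pos hda] at hPa))
      (bound_step hdb hdb' hα0 hC0 (by rwa [abs_of_pos hdb] at hPb))
      (bound_step hdc hdc' hα0 hC0 (by rwa [abs_of_pos hdc] at hPc))
      hm3
  · -- left case
    intro hx0 hH
    obtain ⟨C, hC⟩ := hH
    rw [Filter.eventually_iff, Metric.mem_nhdsWithin_iff] at hC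
    obtain ⟨δ, hδ, hsub⟩ := hC
    obtain ⟨m, hm1, hm2, hm3⟩ :=
      ((htend.eventually_lt_const hδ).and
        ((htend.eventually_lt_const hx0).and
          ((htend2 C).eventually_lt_const (by norm_num : (0:ℝ) < 1)))).exists
    have hP2 : (0:ℝ) < (2:ℝ)^m := by positivity
    set t : ℝ := (2:ℝ)^m * x₀ with htdef
    have hcl0 : (0:ℤ) ≤ ⌈t⌉ := Int.ceil_nonneg (by positivity)
    obtain ⟨K, hKR⟩ : ∃ K : ℕ, (K:ℝ) = (⌈t⌉:ℝ) :=
      ⟨⌈t⌉.toNat, by exact_mod_cast congrArg (Int.cast : ℤ → ℝ) (Int.toNat_of_nonneg hcl0)⟩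
    have hmul := hhalfmul m
    have hclge : t ≤ (K:ℝ) := by rw [hKR]; exact Int.le_ceil t
    have hcllt : (K:ℝ) < t + 1 := by rw [hKR]; exact Int.ceil_lt_add_one t
    have ht2 : (2:ℝ) < t := by
      have : 2*(1/2:ℝ)^m * 2^m < x₀ * 2^m := by
        apply mul_lt_mul_of_pos_right hm2 hP2
      rw [htdef]
      nlinarith
    have hK2 : 2 ≤ K := by
      have : (2:ℝ) < (K:ℝ) := by linarith
      exact_mod_cast this.le
    obtain ⟨k, hkR⟩ : ∃ k : ℕ, (k:ℝ) = (K:ℝ) - 2 :=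
      ⟨K - 2, by rw [Nat.cast_sub hK2]; push_cast; ring⟩
    have hbx : ((k:ℝ)+1)/2^m < x₀ := by
      rw [div_lt_iff₀ hP2, hkR]
      nlinarith
    have ha0 : (0:ℝ) ≤ (k:ℝ)/2^m := by positivity
    have ha_ge : x₀ - 2*(1/2:ℝ)^m ≤ (k:ℝ)/2^m := by
      rw [le_div_iff₀ hP2, hkR]
      nlinarith
    have hkN : k + 1 ≤ 2^m := by
      have h' : (k:ℝ)+1 < 2^m := by
        have := hbx.trans_le hx₀1
        rw [div_lt_one hP2] at this
        exact this
      have : ((k+1:ℕ):ℝ) ≤ ((2^m:ℕ):ℝ) := by push_cast; linarith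
      exact_mod_cast this
    have hcmid : (2*(k:ℝ)+1)/2^(m+1) = ((k:ℝ)/2^m + ((k:ℝ)+1)/2^m)/2 := by
      rw [pow_succ]; field_simp; ring
    have hab : (k:ℝ)/2^m < ((k:ℝ)+1)/2^m := by
      gcongr
      linarith
    have hbound : ∀ y : ℝ, (k:ℝ)/2^m ≤ y → y < x₀ →
        |Ffun y - Ffun x₀| / |y - x₀| ^ α ≤ C ∧ 0 < x₀ - y ∧ x₀ - y ≤ 2*(1/2:ℝ)^m := by
      intro y hy1 hy2
      have hyd : x₀ - y ≤ 2*(1/2:ℝ)^m := by linarith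
      have hy0 : 0 ≤ y := le_trans ha0 hy1
      have hmem : y ∈ Metric.ball x₀ δ ∩ Set.Ico 0 x₀ := by
        constructor
        · rw [Metric.mem_ball, Real.dist_eq, abs_of_neg (by linarith : y - x₀ < 0)]
          simp only [neg_sub]
          linarith
        · exact ⟨hy0, hy2⟩
      exact ⟨hsub hmem, by linarith, hyd⟩
    obtain ⟨hPa, hda, hda'⟩ := hbound _ le_rfl (hab.trans hbx)
    obtain ⟨hPb, hdb, hdb'⟩ := hbound _ hab.le hbx
    have hcx : (2*(k:ℝ)+1)/2^(m+1) < x₀ := by rw [hcmid]; linarith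
    have hcge : (k:ℝ)/2^m ≤ (2*(k:ℝ)+1)/2^(m+1) := by rw [hcmid]; linarith
    obtain ⟨hPc, hdc, hdc'⟩ := hbound _ hcge hcx
    have hC0 : 0 ≤ C :=
      le_trans (div_nonneg (abs_nonneg _) (Real.rpow_nonneg (abs_nonneg _) α)) hPa
    have habs : ∀ y : ℝ, y < x₀ → |y - x₀| = x₀ - y := by
      intro y hy
      rw [abs_of_neg (by linarith : y - x₀ < 0)]
      ring
    exact punchline hα0 hα1 hC0 hkN
      (bound_step hda hda' hα0 hC0 (by rwa [habs _ (hab.trans hbx)] at hPa))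
      (bound_step hdb hdb' hα0 hC0 (by rwa [habs _ hbx] at hPb))
      (bound_step hdc hdc' hα0 hC0 (by rwa [habs _ hcx] at hPc))
      hm3
end

section
/- Let f : [0,1] → ℝ be α-Hölder continuous for some α > 1/2 and nowhere differentiable, and let F : ℝ → ℝ be twice continuously differentiable. Then for x₀ ∈ (0,1), F ∘ f is differentiable at x₀ if and only if F′(f(x₀)) = 0; moreover the same equivalence holds for one-sided derivatives. -/
open Filter Set Topology MeasureTheory ProbabilityTheory

-- quadratic bound near a critical point of a C² function
lemma quad_bound (F : ℝ → ℝ) (hF : ContDiff ℝ 2 F) (c : ℝ) (h0 : deriv F c = 0) :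
    ∃ K ≥ (0:ℝ), ∃ δ > (0:ℝ), ∀ b : ℝ, |b - c| ≤ δ → |F b - F c| ≤ K * |b - c| ^ 2 := by
  have hF2 : ContDiff ℝ (1 + 1) F := by norm_num; exact hF
  have hF1 : ContDiff ℝ 1 (deriv F) := (contDiff_succ_iff_deriv.mp hF2).2.2
  have hFd : Differentiable ℝ F := (contDiff_succ_iff_deriv.mp hF2).1
  have hder : DifferentiableAt ℝ (deriv F) c := (hF1.differentiable one_ne_zero).differentiableAt
  have hO : (fun b => deriv F b) =O[𝓝 c] fun b => b - c := by
    have := hder.isBigO_sub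
    simpa [h0] using this
  obtain ⟨K, hKb⟩ := hO.bound
  rw [Metric.eventually_nhds_iff] at hKb
  obtain ⟨ε, hε, hKb⟩ := hKb
  refine ⟨|K|, abs_nonneg _, ε / 2, by positivity, fun b hb => ?_⟩
  have hconv : Convex ℝ (Metric.closedBall c |b - c|) := convex_closedBall _ _
  have key : ‖F b - F c‖ ≤ |K| * |b - c| * ‖b - c‖ := by
    refine hconv.norm_image_sub_le_of_norm_hasDerivWithin_le
      (f' := deriv F) (fun x hx => (hFd x).hasDerivAt.hasDerivWithinAt) (fun x hx => ?_)
      (Metric.mem_closedBall_self (abs_nonneg _)) ?_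
    · have hx' : dist x c ≤ |b - c| := Metric.mem_closedBall.mp hx
      have h1 : ‖deriv F x‖ ≤ K * ‖x - c‖ := by
        apply hKb
        calc dist x c ≤ |b - c| := hx'
          _ ≤ ε / 2 := hb
          _ < ε := by linarith
      calc ‖deriv F x‖ ≤ K * ‖x - c‖ := h1
        _ ≤ |K| * |b - c| := by
            rw [Real.norm_eq_abs]
            exact mul_le_mul (le_abs_self K) (by simpa [Real.dist_eq] using hx')
              (abs_nonneg _) (abs_nonneg _)
    · simp [Metric.mem_closedBall, Real.dist_eq]
  calc |F b - F c| ≤ |K| * |b - c| * |b - c| := by simpa [Real.norm_eq_abs] using key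
    _ = |K| * |b - c| ^ 2 := by ring


/-- if `f` is `α`-Hölder on `[0,1]` for some `α > 1/2` and nowhere
differentiable on `(0,1)`, and `F` is `C²`, then `F ∘ f` is differentiable at `x₀ ∈ (0,1)`
iff `F'(f x₀) = 0`; the same equivalence holds for one-sided derivatives (under the
hypothesis that `f` has nowhere a one-sided derivative). -/
theorem stmt13 (f F : ℝ → ℝ) (α C : ℝ) (hα : 1 / 2 < α)
    (hHolder : ∀ x ∈ Set.Icc (0 : ℝ) 1, ∀ y ∈ Set.Icc (0 : ℝ) 1,
      |f x - f y| ≤ C * |x - y| ^ α)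
    (hF : ContDiff ℝ 2 F) (x₀ : ℝ) (hx₀ : x₀ ∈ Set.Ioo (0 : ℝ) 1) :
    ((∀ x ∈ Set.Ioo (0 : ℝ) 1, ¬ DifferentiableAt ℝ f x) →
      (DifferentiableAt ℝ (F ∘ f) x₀ ↔ deriv F (f x₀) = 0)) ∧
    ((∀ x ∈ Set.Ioo (0 : ℝ) 1, ¬ DifferentiableWithinAt ℝ f (Set.Ici x) x ∧
        ¬ DifferentiableWithinAt ℝ f (Set.Iic x) x) →
      ((DifferentiableWithinAt ℝ (F ∘ f) (Set.Ici x₀) x₀ ↔ deriv F (f x₀) = 0) ∧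
       (DifferentiableWithinAt ℝ (F ∘ f) (Set.Iic x₀) x₀ ↔ deriv F (f x₀) = 0))) := by
  have hαpos : (0:ℝ) < α := by linarith
  have hx01 : x₀ ∈ Set.Icc (0:ℝ) 1 := ⟨hx₀.1.le, hx₀.2.le⟩
  have hIcc : Set.Icc (0:ℝ) 1 ∈ 𝓝 x₀ := Icc_mem_nhds hx₀.1 hx₀.2
  -- eventual Hölder bound at x₀
  have hfy : ∀ᶠ y in 𝓝 x₀, |f y - f x₀| ≤ |C| * |y - x₀| ^ α := by
    filter_upwards [hIcc] with y hy
    calc |f y - f x₀| ≤ C * |y - x₀| ^ α := hHolder y hy x₀ hx01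
      _ ≤ |C| * |y - x₀| ^ α :=
        mul_le_mul_of_nonneg_right (le_abs_self C) (Real.rpow_nonneg (abs_nonneg _) _)
  -- the Hölder modulus tends to 0
  have htend : Tendsto (fun y => |C| * |y - x₀| ^ α) (𝓝 x₀) (𝓝 0) := by
    have h1 : Tendsto (fun y : ℝ => |y - x₀|) (𝓝 x₀) (𝓝 0) := by
      have h0 : Tendsto (fun y : ℝ => y - x₀) (𝓝 x₀) (𝓝 (x₀ - x₀)) :=
        tendsto_id.sub_const x₀
      rw [sub_self] at h0
      simpa using h0.abs
    have h2 : ContinuousAt (fun t : ℝ => t ^ α) 0 :=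
      Real.continuousAt_rpow_const 0 α (Or.inr hαpos.le)
    have h3 : Tendsto (fun y : ℝ => |y - x₀| ^ α) (𝓝 x₀) (𝓝 0) := by
      have := h2.tendsto.comp h1
      simpa [Function.comp_def, Real.zero_rpow hαpos.ne'] using this
    simpa using h3.const_mul |C|
  -- continuity of f at x₀
  have hcont : ContinuousAt f x₀ := by
    have h4 : Tendsto (fun y => f y - f x₀) (𝓝 x₀) (𝓝 0) :=
      squeeze_zero_norm' (by simpa [Real.norm_eq_abs] using hfy) htend
    have : Tendsto (fun y => f y - f x₀ + f x₀) (𝓝 x₀) (𝓝 (0 + f x₀)) :=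
      h4.add_const _
    simpa [ContinuousAt] using this
  -- backward direction: critical point gives derivative 0
  have hbwd : deriv F (f x₀) = 0 → HasDerivAt (F ∘ f) 0 x₀ := by
    intro h0
    obtain ⟨K, hK0, δ, hδ, hKb⟩ := quad_bound F hF (f x₀) h0
    have hev : ∀ᶠ y in 𝓝 x₀,
        |F (f y) - F (f x₀)| ≤ K * |C| ^ 2 * |y - x₀| ^ (2 * α) := by
      filter_upwards [hfy, htend.eventually_le_const hδ] with y h1 h2
      have hb : |f y - f x₀| ≤ δ := h1.trans h2
      calc |F (f y) - F (f x₀)| ≤ K * |f y - f x₀| ^ 2 := hKb _ hb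
        _ ≤ K * (|C| * |y - x₀| ^ α) ^ 2 := by
            apply mul_le_mul_of_nonneg_left _ hK0
            exact pow_le_pow_left₀ (abs_nonneg _) h1 2
        _ = K * |C| ^ 2 * |y - x₀| ^ (2 * α) := by
            rw [mul_pow, ← Real.rpow_natCast (|y - x₀| ^ α) 2,
              ← Real.rpow_mul (abs_nonneg _)]
            ring_nf
    have hM0 : (0:ℝ) ≤ K * |C| ^ 2 := by positivity
    obtain ⟨β, hβpos, hβeq⟩ : ∃ β, 0 < β ∧ 2 * α = β + 1 := ⟨2 * α - 1, by linarith, by ring⟩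
    rw [hβeq] at hev
    have hlim : Tendsto (fun y => K * |C| ^ 2 * |y - x₀| ^ β) (𝓝 x₀) (𝓝 (K * |C| ^ 2 * 0)) := by
      have h1 : Tendsto (fun y : ℝ => |y - x₀|) (𝓝 x₀) (𝓝 0) := by
        have h0 : Tendsto (fun y : ℝ => y - x₀) (𝓝 x₀) (𝓝 (x₀ - x₀)) :=
          tendsto_id.sub_const x₀
        rw [sub_self] at h0
        simpa using h0.abs
      have h2 : ContinuousAt (fun t : ℝ => t ^ β) 0 :=
        Real.continuousAt_rpow_const 0 _ (Or.inr hβpos.le)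
      have h3 := h2.tendsto.comp h1
      rw [Real.zero_rpow hβpos.ne'] at h3
      exact h3.const_mul (K * |C| ^ 2)
    rw [mul_zero] at hlim
    rw [hasDerivAt_iff_isLittleO]
    simp only [smul_zero, sub_zero]
    rw [Asymptotics.isLittleO_iff]
    intro ε hε
    filter_upwards [hev, hlim.eventually_le_const hε] with y h1 h2
    have habs : |y - x₀| ^ (β + 1) = |y - x₀| ^ β * |y - x₀| := by
      rw [Real.rpow_add' (abs_nonneg _) (by positivity : β + 1 ≠ 0), Real.rpow_one]
    calc ‖(F ∘ f) y - (F ∘ f) x₀‖ = |F (f y) - F (f x₀)| := by simp [Function.comp]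
      _ ≤ K * |C| ^ 2 * |y - x₀| ^ (β + 1) := h1
      _ = K * |C| ^ 2 * |y - x₀| ^ β * |y - x₀| := by rw [habs]; ring
      _ ≤ ε * |y - x₀| := mul_le_mul_of_nonneg_right h2 (abs_nonneg _)
      _ = ε * ‖y - x₀‖ := by rw [Real.norm_eq_abs]
  -- forward direction: non-critical point lets us invert F locally
  have hfwd : ∀ s : Set ℝ, deriv F (f x₀) ≠ 0 → DifferentiableWithinAt ℝ (F ∘ f) s x₀ →
      DifferentiableWithinAt ℝ f s x₀ := by
    intro s hne h
    have hsd : HasStrictDerivAt F (deriv F (f x₀)) (f x₀) :=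
      hF.contDiffAt.hasStrictDerivAt (by norm_num)
    set g := hsd.localInverse F _ (f x₀) hne with hgdef
    have hg : HasStrictDerivAt g (deriv F (f x₀))⁻¹ (F (f x₀)) := hsd.to_localInverse hne
    have hleft : ∀ᶠ b in 𝓝 (f x₀), g (F b) = b :=
      (hsd.hasStrictFDerivAt_equiv hne).eventually_left_inverse
    have hpt : g (F (f x₀)) = f x₀ :=
      (hsd.hasStrictFDerivAt_equiv hne).localInverse_apply_image
    have heq : ∀ᶠ y in 𝓝 x₀, g (F (f y)) = f y := hcont.eventually hleft
    have hcomp : DifferentiableWithinAt ℝ (g ∘ (F ∘ f)) s x₀ :=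
      ((HasStrictDerivAt.hasDerivAt hg).differentiableAt.comp_differentiableWithinAt x₀ h)
    exact hcomp.congr_of_eventuallyEq
      (Filter.Eventually.mono (nhdsWithin_le_nhds heq) fun y hy => hy.symm) hpt.symm
  refine ⟨fun hnd => ⟨fun h => ?_, fun h => (hbwd h).differentiableAt⟩,
    fun hnd => ⟨⟨fun h => ?_, fun h => ((hbwd h).hasDerivWithinAt).differentiableWithinAt⟩,
      ⟨fun h => ?_, fun h => ((hbwd h).hasDerivWithinAt).differentiableWithinAt⟩⟩⟩
  · by_contra hne
    exact hnd x₀ hx₀ (by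
      simpa [differentiableWithinAt_univ] using hfwd univ hne h.differentiableWithinAt)
  · by_contra hne; exact (hnd x₀ hx₀).1 (hfwd _ hne h)
  · by_contra hne; exact (hnd x₀ hx₀).2 (hfwd _ hne h)
end

section
/- Let f : [0,1] → ℝ be α-Hölder continuous for some α > 1/2, let F : ℝ → ℝ be C², and suppose F′(f(x₀)) = 0 at some x₀ ∈ [0,1]. Then F ∘ f is differentiable at x₀ with derivative 0. -/
open Filter Set Topology MeasureTheory ProbabilityTheory

/-- if `f` is `α`-Hölder on `[0,1]` for some `α > 1/2`, `F` is `C²` and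
`F'(f x₀) = 0` at `x₀ ∈ [0,1]`, then `F ∘ f` is differentiable at `x₀` (within `[0,1]`,
i.e. one-sidedly at the endpoints) with derivative `0`. -/
theorem stmt14 (f F : ℝ → ℝ) (α C : ℝ) (hα : 1 / 2 < α)
    (hHolder : ∀ x ∈ Set.Icc (0 : ℝ) 1, ∀ y ∈ Set.Icc (0 : ℝ) 1,
      |f x - f y| ≤ C * |x - y| ^ α)
    (hF : ContDiff ℝ 2 F) (x₀ : ℝ) (hx₀ : x₀ ∈ Set.Icc (0 : ℝ) 1)
    (hderiv : deriv F (f x₀) = 0) :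
    HasDerivWithinAt (F ∘ f) 0 (Set.Icc 0 1) x₀ := by
  have hα0 : 0 < α := lt_trans (by norm_num) hα
  set c := f x₀ with hc
  -- Hölder with nonnegative constant
  have hHolder' : ∀ y ∈ Set.Icc (0:ℝ) 1, |f y - c| ≤ |C| * |y - x₀| ^ α := by
    intro y hy
    calc |f y - c| ≤ C * |y - x₀| ^ α := hHolder y hy x₀ hx₀
    _ ≤ |C| * |y - x₀| ^ α := by
        apply mul_le_mul_of_nonneg_right (le_abs_self C)
        positivity
  -- deriv F is locally Lipschitz at c
  have hF' : ContDiff ℝ 1 (deriv F) := by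
    have h2 : ContDiff ℝ ((1 : WithTop ℕ∞) + 1) F := by
      convert hF using 2
      exact one_add_one_eq_two
    exact (contDiff_succ_iff_deriv.mp h2).2.2
  obtain ⟨K, t, ht, hlip⟩ := hF'.contDiffAt.exists_lipschitzOnWith
  obtain ⟨δ, hδ0, hδt⟩ := Metric.mem_nhds_iff.mp ht
  -- quadratic bound for F near c
  have hFdiff : ∀ u : ℝ, DifferentiableAt ℝ F u :=
    fun u => (hF.differentiable two_ne_zero).differentiableAt
  have hquad : ∀ b : ℝ, |b - c| < δ → |F b - F c| ≤ K * |b - c| * |b - c| := by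
    intro b hb
    have hub : ∀ u ∈ segment ℝ c b, |u - c| ≤ |b - c| := by
      intro u hu
      rw [segment_eq_uIcc] at hu
      rcases hu with ⟨h1, h2⟩
      rcases le_total c b with h | h
      · simp [h] at h1 h2
        rw [abs_of_nonneg (by linarith), abs_of_nonneg (by linarith)]; linarith
      · simp [h] at h1 h2
        rw [abs_of_nonpos (by linarith), abs_of_nonpos (by linarith)]; linarith
    have hseg : segment ℝ c b ⊆ Metric.ball c δ := by
      intro u hu
      rw [Metric.mem_ball, Real.dist_eq]
      exact lt_of_le_of_lt (hub u hu) hb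
    have hbound : ∀ u ∈ segment ℝ c b, ‖deriv F u‖ ≤ (K : ℝ) * |b - c| := by
      intro u hu
      have hu' : u ∈ t := hδt (hseg hu)
      have hc' : c ∈ t := hδt (Metric.mem_ball_self hδ0)
      have := hlip.dist_le_mul u hu' c hc'
      rw [hderiv] at this
      simp only [dist_zero_right, Real.dist_eq] at this ⊢
      calc ‖deriv F u‖ = dist (deriv F u) 0 := by simp
        _ ≤ (K : ℝ) * |u - c| := by rw [← hderiv]; simpa [Real.dist_eq] using hlip.dist_le_mul u hu' c hc'
        _ ≤ (K : ℝ) * |b - c| := mul_le_mul_of_nonneg_left (hub u hu) K.coe_nonneg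
    have := (convex_segment c b).norm_image_sub_le_of_norm_deriv_le
      (fun u _ => hFdiff u) hbound (left_mem_segment ℝ c b) (right_mem_segment ℝ c b)
    simpa [Real.norm_eq_abs, mul_assoc] using this
  -- main limit
  rw [hasDerivWithinAt_iff_tendsto_slope]
  set M : ℝ := (K : ℝ) * |C| ^ 2 with hM
  have hM0 : 0 ≤ M := by positivity
  -- tendsto of the majorant
  have habs : Tendsto (fun y => |y - x₀|) (𝓝 x₀) (𝓝 0) := by
    have : Continuous fun y : ℝ => |y - x₀| := (continuous_id.sub continuous_const).abs
    simpa using this.tendsto x₀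
  have hrpow : ∀ β : ℝ, 0 < β → Tendsto (fun y => |y - x₀| ^ β) (𝓝 x₀) (𝓝 0) := by
    intro β hβ
    have hcont : ContinuousAt (fun x : ℝ => x ^ β) 0 :=
      Real.continuousAt_rpow_const 0 β (Or.inr hβ.le)
    have := hcont.tendsto.comp habs
    simpa [Real.zero_rpow hβ.ne', Function.comp_def] using this
  have hmaj : Tendsto (fun y => M * |y - x₀| ^ (2 * α - 1)) (𝓝[Set.Icc 0 1 \ {x₀}] x₀) (𝓝 0) := by
    have := (hrpow (2 * α - 1) (by linarith)).const_mul M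
    simpa using this.mono_left nhdsWithin_le_nhds
  apply squeeze_zero_norm' _ hmaj
  -- eventually: f y close to c
  have hfce : ∀ᶠ y in 𝓝[Set.Icc 0 1 \ {x₀}] x₀, |f y - c| < δ := by
    have h1 : Tendsto (fun y => |C| * |y - x₀| ^ α) (𝓝[Set.Icc 0 1 \ {x₀}] x₀) (𝓝 0) := by
      have := (hrpow α hα0).const_mul |C|
      simpa using this.mono_left nhdsWithin_le_nhds
    have h2 := h1.eventually (eventually_lt_nhds hδ0)
    filter_upwards [h2, self_mem_nhdsWithin] with y hy hy'
    exact lt_of_le_of_lt (hHolder' y hy'.1) hy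
  filter_upwards [hfce, self_mem_nhdsWithin] with y hy hy'
  obtain ⟨hyI, hyne⟩ := hy'
  have hyne' : y ≠ x₀ := by simpa using hyne
  have hr0 : 0 < |y - x₀| := abs_pos.mpr (sub_ne_zero.mpr hyne')
  have key : |F (f y) - F c| ≤ M * |y - x₀| ^ (2 * α) := by
    calc |F (f y) - F c| ≤ K * |f y - c| * |f y - c| := hquad _ hy
      _ ≤ K * (|C| * |y - x₀| ^ α) * (|C| * |y - x₀| ^ α) := by
          apply mul_le_mul (mul_le_mul_of_nonneg_left (hHolder' y hyI) K.coe_nonneg)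
            (hHolder' y hyI) (abs_nonneg _) (by positivity)
      _ = M * (|y - x₀| ^ α * |y - x₀| ^ α) := by ring
      _ = M * |y - x₀| ^ (2 * α) := by
          rw [← Real.rpow_add hr0]; ring_nf
  have hslope : ‖slope (F ∘ f) x₀ y‖ = |F (f y) - F c| / |y - x₀| := by
    rw [slope_def_field]
    simp [Real.norm_eq_abs, abs_div, Function.comp, ← hc]
  rw [hslope]
  rw [div_le_iff₀ hr0]
  have h2a : (2 * α - 1) + 1 = 2 * α := by ring
  calc |F (f y) - F c| ≤ M * |y - x₀| ^ (2 * α) := key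
    _ = M * |y - x₀| ^ ((2 * α - 1) + 1) := by rw [h2a]
    _ = M * |y - x₀| ^ (2 * α - 1) * |y - x₀| := by
        rw [Real.rpow_add_one hr0.ne']; ring
end

section
/- Takagi's function T : [0,1] → ℝ, defined by T(x) = Σ_{n≥0} 2^{−n} Σ_{i=0}^{2ⁿ−1} σ_{n,i}(x), is α-Hölder continuous for every α ∈ (0,1): for each such α there is C with |T(x) − T(y)| ≤ C|x − y|^α for all x, y ∈ [0,1]. -/
open Filter Set Topology MeasureTheory ProbabilityTheory

/-- Takagi's function `T(x) = Σ_{n≥0} 2^{-n} Σ_{i=0}^{2ⁿ-1} σ_{n,i}(x)`. -/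
noncomputable def takagi (x : ℝ) : ℝ :=
  ∑' n : ℕ, ((1 : ℝ) / 2) ^ n * ∑ i ∈ Finset.range (2 ^ n), fs n i x

lemma tent_eq_zero {t : ℝ} (h : t ≤ 0 ∨ 1 ≤ t) : tent t = 0 := by
  simp [tent, h]

lemma tent_fract (t : ℝ) : tent (Int.fract t) = 2 * |t - round t| := by
  rw [abs_sub_round_eq_min]
  have h0 := Int.fract_nonneg t
  have h1 := Int.fract_lt_one t
  rcases eq_or_lt_of_le h0 with h | h
  · rw [← h, tent_eq_zero (Or.inl le_rfl)]
    simp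
  · have hne : ¬ (Int.fract t ≤ 0 ∨ 1 ≤ Int.fract t) := by
      push_neg; exact ⟨h, h1⟩
    rw [tent, if_neg hne]
    rcases le_or_gt (Int.fract t) (1/2) with h2 | h2
    · rw [if_pos h2, min_eq_left (by linarith)]
    · rw [if_neg (not_le.mpr h2), min_eq_right (by linarith)]
      ring

lemma sum_tent {m : ℕ} {t : ℝ} (h0 : 0 ≤ t) (h1 : t ≤ m) :
    ∑ i ∈ Finset.range m, tent (t - i) = 2 * |t - round t| := by
  have hfl : (0:ℤ) ≤ ⌊t⌋ := Int.le_floor.mpr (by exact_mod_cast h0)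
  set k : ℕ := ⌊t⌋.toNat with hk
  have hkc : (k : ℝ) = (⌊t⌋ : ℝ) := by exact_mod_cast Int.toNat_of_nonneg hfl
  have hfr : t - k = Int.fract t := by rw [hkc]; rfl
  rw [← tent_fract]
  rw [Finset.sum_eq_single k]
  · rw [hfr]
  · intro i hi hne
    have hfr0 := Int.fract_nonneg t
    have hfr1 := Int.fract_lt_one t
    rcases lt_or_gt_of_ne hne with h | h
    · -- i < k : t - i ≥ 1
      refine tent_eq_zero (Or.inr ?_)
      have : (i:ℝ) + 1 ≤ k := by exact_mod_cast h
      have := hfr ▸ (by linarith : t - (k:ℝ) ≥ 0)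
      linarith [hfr ▸ (Int.fract_nonneg t)]
    · -- i > k : t - i ≤ 0
      refine tent_eq_zero (Or.inl ?_)
      have : (k:ℝ) + 1 ≤ i := by exact_mod_cast h
      have h2 : t - k < 1 := by rw [hfr]; exact Int.fract_lt_one t
      linarith
  · intro hk2
    have hm : m ≤ k := by by_contra hc; exact hk2 (Finset.mem_range.mpr (lt_of_not_ge hc))
    have : (m:ℝ) ≤ k := by exact_mod_cast hm
    exact tent_eq_zero (Or.inl (by linarith))

noncomputable def g (n : ℕ) (x : ℝ) : ℝ :=
  ((1 : ℝ) / 2) ^ n * ∑ i ∈ Finset.range (2 ^ n), fs n i x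

lemma g_eq {n : ℕ} {x : ℝ} (h0 : 0 ≤ x) (h1 : x ≤ 1) :
    g n x = (1/2)^n * (2 * |2^n * x - round ((2:ℝ)^n * x)|) := by
  have h2 : (0:ℝ) < 2^n := by positivity
  rw [g, ← sum_tent (m := 2^n) (t := 2^n * x) (by positivity) (by push_cast; nlinarith)]
  rfl


lemma g_bound {n : ℕ} {x : ℝ} (h0 : 0 ≤ x) (h1 : x ≤ 1) : |g n x| ≤ (1/2)^n := by
  rw [g_eq h0 h1]
  have hr := abs_sub_round ((2:ℝ)^n * x)
  have hr0 : (0:ℝ) ≤ |2^n * x - round ((2:ℝ)^n * x)| := abs_nonneg _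
  rw [abs_of_nonneg (by positivity)]
  nlinarith [pow_pos (by norm_num : (0:ℝ) < 1/2) n]

lemma g_lip {n : ℕ} {x y : ℝ} (hx0 : 0 ≤ x) (hx1 : x ≤ 1) (hy0 : 0 ≤ y) (hy1 : y ≤ 1) :
    |g n x - g n y| ≤ 2 * |x - y| := by
  rw [g_eq hx0 hx1, g_eq hy0 hy1]
  set s := (2:ℝ)^n * x
  set t := (2:ℝ)^n * y
  have key : |(2 * |s - round s|) - (2 * |t - round t|)| ≤ 2 * |s - t| := by
    rw [abs_sub_le_iff]
    constructor
    · have h1 : |s - round s| ≤ |s - (round t : ℤ)| := round_le s (round t)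
      have h2 : |s - round t| ≤ |s - t| + |t - round t| := by
        calc |s - round t| = |(s - t) + (t - round t)| := by ring_nf
          _ ≤ |s - t| + |t - round t| := abs_add_le _ _
      push_cast at h1
      linarith
    · have h1 : |t - round t| ≤ |t - (round s : ℤ)| := round_le t (round s)
      have h2 : |t - round s| ≤ |t - s| + |s - round s| := by
        calc |t - round s| = |(t - s) + (s - round s)| := by ring_nf
          _ ≤ |t - s| + |s - round s| := abs_add_le _ _
      rw [abs_sub_comm t s] at h2
      push_cast at h1
      linarith
  calc |(1/2)^n * (2 * |s - round s|) - (1/2)^n * (2 * |t - round t|)|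
      = (1/2)^n * |(2 * |s - round s|) - (2 * |t - round t|)| := by
        rw [← mul_sub, abs_mul, abs_of_nonneg (by positivity : (0:ℝ) ≤ ((1:ℝ)/2)^n)]
    _ ≤ (1/2)^n * (2 * |s - t|) := by gcongr
    _ = 2 * ((1/2)^n * 2^n) * |x - y| := by
        rw [show s - t = 2^n * (x - y) by ring, abs_mul,
          abs_of_nonneg (by positivity : (0:ℝ) ≤ (2:ℝ)^n)]
        ring
    _ = 2 * |x - y| := by
        rw [show ((1:ℝ)/2)^n * 2^n = 1 by rw [← mul_pow]; norm_num]
        ring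

lemma g_summable (x : ℝ) (h0 : 0 ≤ x) (h1 : x ≤ 1) : Summable (fun n => g n x) := by
  apply Summable.of_norm
  apply Summable.of_nonneg_of_le (fun n => norm_nonneg _) (fun n => ?_)
    (summable_geometric_of_lt_one (by norm_num) (by norm_num) : Summable fun n => ((1:ℝ)/2)^n)
  simpa using g_bound (n := n) h0 h1

lemma takagi_diff_bound {x y : ℝ} (hx0 : 0 ≤ x) (hx1 : x ≤ 1) (hy0 : 0 ≤ y) (hy1 : y ≤ 1)
    (N : ℕ) : |takagi x - takagi y| ≤ 2 * N * |x - y| + 4 * (1/2)^N := by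
  have hsx := g_summable x hx0 hx1
  have hsy := g_summable y hy0 hy1
  have hs : Summable (fun n => g n x - g n y) := hsx.sub hsy
  have hsa : Summable (fun n => |g n x - g n y|) := hs.abs
  have hT : takagi x - takagi y = ∑' n, (g n x - g n y) := by
    rw [show takagi x = ∑' n, g n x from rfl, show takagi y = ∑' n, g n y from rfl]
    exact (Summable.tsum_sub hsx hsy).symm
  have hsa' : Summable (fun n => ‖g n x - g n y‖) := by
    simpa only [Real.norm_eq_abs] using hsa
  have habs : |takagi x - takagi y| ≤ ∑' n, |g n x - g n y| := by
    rw [hT, ← Real.norm_eq_abs]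
    have h2 := norm_tsum_le_tsum_norm hsa'
    simpa only [Real.norm_eq_abs] using h2
  have hsplit := (hsa.sum_add_tsum_nat_add N).symm
  have hhead : ∑ i ∈ Finset.range N, |g i x - g i y| ≤ N * (2 * |x - y|) := by
    calc ∑ i ∈ Finset.range N, |g i x - g i y|
        ≤ ∑ _i ∈ Finset.range N, 2 * |x - y| :=
          Finset.sum_le_sum (fun i _ => g_lip hx0 hx1 hy0 hy1)
      _ = N * (2 * |x - y|) := by rw [Finset.sum_const, Finset.card_range, nsmul_eq_mul]
  have htail : ∑' n, |g (n + N) x - g (n + N) y| ≤ 4 * (1/2)^N := by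
    have hgeom : Summable (fun n : ℕ => (2 * ((1:ℝ)/2)^N) * ((1:ℝ)/2)^n) :=
      (summable_geometric_of_lt_one (by norm_num) (by norm_num)).mul_left _
    have hle : ∀ n : ℕ, |g (n + N) x - g (n + N) y| ≤ (2 * (1/2)^N) * (1/2)^n := by
      intro n
      calc |g (n + N) x - g (n + N) y| ≤ |g (n + N) x| + |g (n + N) y| := by
            rw [sub_eq_add_neg]; exact (abs_add_le _ _).trans (by rw [abs_neg])
        _ ≤ (1/2)^(n + N) + (1/2)^(n + N) :=
            add_le_add (g_bound hx0 hx1) (g_bound hy0 hy1)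
        _ = (2 * (1/2)^N) * (1/2)^n := by rw [pow_add]; ring
    calc ∑' n, |g (n + N) x - g (n + N) y|
        ≤ ∑' n : ℕ, (2 * ((1:ℝ)/2)^N) * ((1:ℝ)/2)^n :=
          Summable.tsum_le_tsum hle ((summable_nat_add_iff N).mpr hsa) hgeom
      _ = (2 * (1/2)^N) * ∑' n : ℕ, ((1:ℝ)/2)^n := tsum_mul_left
      _ = 4 * (1/2)^N := by
          rw [tsum_geometric_of_lt_one (by norm_num) (by norm_num)]; ring
  calc |takagi x - takagi y| ≤ ∑' n, |g n x - g n y| := habs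
    _ = ∑ i ∈ Finset.range N, |g i x - g i y| + ∑' n, |g (n + N) x - g (n + N) y| := hsplit
    _ ≤ N * (2 * |x - y|) + 4 * (1/2)^N := add_le_add hhead htail
    _ = 2 * N * |x - y| + 4 * (1/2)^N := by ring

/-- Takagi's function is `α`-Hölder continuous for every `α ∈ (0,1)`. -/
theorem stmt15 :
    ∀ α ∈ Set.Ioo (0 : ℝ) 1, ∃ C : ℝ, ∀ x ∈ Set.Icc (0 : ℝ) 1, ∀ y ∈ Set.Icc (0 : ℝ) 1,
      |takagi x - takagi y| ≤ C * |x - y| ^ α := by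
  rintro α ⟨hα0, hα1⟩
  set β : ℝ := 1 - α with hβdef
  have hβ : 0 < β := by simp [hβdef]; linarith
  have hL : 0 < Real.log 2 := Real.log_pos one_lt_two
  set K : ℝ := 1 / (β * Real.log 2) + 1 with hKdef
  have hK : 0 < K := by
    have := div_pos one_pos (mul_pos hβ hL); rw [hKdef]; linarith
  refine ⟨2 * K + 4, ?_⟩
  rintro x ⟨hx0, hx1⟩ y ⟨hy0, hy1⟩
  rcases eq_or_ne x y with rfl | hne
  · simp [Real.zero_rpow hα0.ne']
  set d : ℝ := |x - y| with hd
  have hd0 : 0 < d := abs_pos.mpr (sub_ne_zero.mpr hne)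
  have hd1 : d ≤ 1 := abs_sub_le_iff.mpr ⟨by linarith, by linarith⟩
  set u : ℝ := 1 / d with hu
  have hu0 : 0 < u := by positivity
  have hu1 : 1 ≤ u := (le_div_iff₀ hd0).mpr (by linarith)
  set N : ℕ := ⌈Real.logb 2 u⌉₊ with hN
  have A := takagi_diff_bound hx0 hx1 hy0 hy1 N
  rw [← hd] at A
  -- Step B : (1/2)^N ≤ d
  have hBu : u ≤ (2:ℝ)^N := by
    have h1 : Real.logb 2 u ≤ (N : ℝ) := Nat.le_ceil _
    have h2 := Real.rpow_le_rpow_of_exponent_le one_le_two h1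
    rwa [Real.rpow_logb two_pos (by norm_num) hu0, Real.rpow_natCast] at h2
  have B : ((1:ℝ)/2)^N ≤ d := by
    have h2 : 1 ≤ 2^N * d := by
      have := (div_le_iff₀ hd0).mp hBu
      linarith
    rw [show ((1:ℝ)/2)^N = 1/2^N by rw [div_pow, one_pow], div_le_iff₀ (by positivity)]
    linarith
  -- Step C : N ≤ K * u^β
  have hub1 : 1 ≤ u ^ β := by
    calc (1:ℝ) = 1 ^ β := (Real.one_rpow β).symm
      _ ≤ u ^ β := Real.rpow_le_rpow zero_le_one hu1 hβ.le
  have hlog : Real.log u ≤ u ^ β / β := by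
    have h1 : Real.log (u ^ β) ≤ u ^ β - 1 := Real.log_le_sub_one_of_pos (by positivity)
    rw [Real.log_rpow hu0] at h1
    rw [le_div_iff₀ hβ]
    nlinarith
  have hNle : (N : ℝ) ≤ Real.logb 2 u + 1 := by
    have := Nat.ceil_lt_add_one (Real.logb_nonneg one_lt_two hu1)
    exact this.le
  have C1 : (N : ℝ) ≤ K * u ^ β := by
    have hlogb : Real.logb 2 u = Real.log u / Real.log 2 := Real.log_div_log.symm
    calc (N : ℝ) ≤ Real.logb 2 u + 1 := hNle
      _ ≤ (u ^ β / β) / Real.log 2 + 1 := by rw [hlogb]; gcongr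
      _ = (1 / (β * Real.log 2)) * u ^ β + 1 := by field_simp
      _ ≤ (1 / (β * Real.log 2)) * u ^ β + 1 * u ^ β := by
          have h01 : 0 < 1 / (β * Real.log 2) := div_pos one_pos (mul_pos hβ hL)
          nlinarith
      _ = K * u ^ β := by rw [hKdef]; ring
  -- Step D
  have D1 : u ^ β * d = d ^ α := by
    rw [hu, one_div, Real.inv_rpow hd0.le, ← Real.rpow_neg hd0.le]
    calc d ^ (-β) * d = d ^ (-β) * d ^ (1:ℝ) := by rw [Real.rpow_one]
      _ = d ^ (-β + 1) := (Real.rpow_add hd0 _ _).symm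
      _ = d ^ α := by rw [show -β + 1 = α by rw [hβdef]; ring]
  have D2 : d ≤ d ^ α := by
    nth_rewrite 1 [← Real.rpow_one d]
    exact Real.rpow_le_rpow_of_exponent_ge hd0 hd1 hα1.le
  have hdα : 0 < d ^ α := Real.rpow_pos_of_pos hd0 α
  clear_value β K d u N
  calc |takagi x - takagi y| ≤ 2 * N * d + 4 * (1/2)^N := A
    _ ≤ 2 * (K * u ^ β) * d + 4 * d := by
        have h1 := mul_le_mul_of_nonneg_right C1 hd0.le
        linarith
    _ = 2 * K * d ^ α + 4 * d := by rw [← D1]; ring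
    _ ≤ 2 * K * d ^ α + 4 * d ^ α := by nlinarith
    _ = (2 * K + 4) * d ^ α := by ring
end

section
/- Takagi's function T(x) = Σ_{n≥0} 2^{−n} Σ_{i=0}^{2ⁿ−1} σ_{n,i}(x) satisfies |T(x+h) − T(x)| ≤ C·|h|·log(1/|h|) for some absolute constant C, all x ∈ [0,1] and all h with x+h ∈ [0,1], 0 < |h| < 1/2. -/
open Filter Set Topology MeasureTheory ProbabilityTheory

/- ### Auxiliary development -/

/-- Twice the distance to the nearest integer. -/
noncomputable def TP (y : ℝ) : ℝ := 2 * |y - round y|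

lemma TP_nonneg (y : ℝ) : 0 ≤ TP y := by unfold TP; positivity

lemma TP_le_one (y : ℝ) : TP y ≤ 1 := by
  have := abs_sub_round y; unfold TP; linarith

lemma TP_lip (a b : ℝ) : |TP a - TP b| ≤ 2 * |a - b| := by
  have h1 : |a - round a| ≤ |a - round b| := round_le a (round b)
  have h2 : |b - round b| ≤ |b - round a| := round_le b (round a)
  have h3 : |a - round b| ≤ |a - b| + |b - round b| := by
    calc |a - round b| = |(a - b) + (b - round b)| := by ring_nf
      _ ≤ |a - b| + |b - round b| := abs_add_le _ _
  have h4 : |b - round a| ≤ |a - b| + |a - round a| := by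
    calc |b - round a| = |(b - a) + (a - round a)| := by ring_nf
      _ ≤ |b - a| + |a - round a| := abs_add_le _ _
      _ = |a - b| + |a - round a| := by rw [abs_sub_comm]
  unfold TP
  rw [abs_le]
  constructor <;> nlinarith [abs_nonneg (a - b)]

lemma tent_zero_of_nonpos {x : ℝ} (h : x ≤ 0) : tent x = 0 := by
  unfold tent; rw [if_pos (Or.inl h)]

lemma tent_zero_of_one_le {x : ℝ} (h : 1 ≤ x) : tent x = 0 := by
  unfold tent; rw [if_pos (Or.inr h)]

lemma collapse (N : ℕ) (y : ℝ) (hy0 : 0 ≤ y) (hyN : y ≤ N) :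
    ∑ i ∈ Finset.range N, tent (y - i) = TP y := by
  rcases eq_or_lt_of_le hyN with h | h
  · subst h
    rw [Finset.sum_eq_zero, TP]
    · rw [round_natCast]; simp
    · intro i hi
      have hi' : i + 1 ≤ N := Finset.mem_range.mp hi
      have : (1 : ℝ) ≤ (N : ℝ) - i := by
        have : ((i : ℝ) + 1) ≤ (N : ℝ) := by exact_mod_cast hi'
        linarith
      exact tent_zero_of_one_le this
  · -- y < N
    have hfl0 : (0 : ℤ) ≤ ⌊y⌋ := Int.le_floor.mpr (by exact_mod_cast hy0)
    set k : ℕ := ⌊y⌋.toNat with hk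
    have hkr : ((k : ℤ) : ℝ) = (⌊y⌋ : ℝ) := by
      rw [Int.toNat_of_nonneg hfl0]
    have hky : (k : ℝ) ≤ y := by
      rw [show ((k : ℕ) : ℝ) = ((k : ℤ) : ℝ) by norm_cast, hkr]
      exact Int.floor_le y
    have hyk : y < (k : ℝ) + 1 := by
      rw [show ((k : ℕ) : ℝ) = ((k : ℤ) : ℝ) by norm_cast, hkr]
      exact Int.lt_floor_add_one y
    have hkN : k < N := by
      by_contra hc
      push_neg at hc
      have : (N : ℝ) ≤ (k : ℝ) := by exact_mod_cast hc
      linarith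
    rw [Finset.sum_eq_single_of_mem k (Finset.mem_range.mpr hkN)]
    · -- main term
      set t : ℝ := y - k with ht
      have ht0 : 0 ≤ t := by simp [ht]; linarith
      have ht1 : t < 1 := by simp [ht]; linarith
      have hfr : Int.fract y = t := by
        rw [Int.fract, ht, ← hkr]; norm_cast
      rw [TP, abs_sub_round_eq_min, hfr]
      show tent t = 2 * min t (1 - t)
      unfold tent
      split_ifs with h1 h2
      · rcases h1 with h1 | h1
        · have : t = 0 := le_antisymm h1 ht0
          rw [this]; norm_num
        · linarith
      · rw [min_eq_left (by linarith)]
      · rw [min_eq_right (by linarith)]; ring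
    · intro i hi hne
      rcases lt_or_gt_of_ne hne with hlt | hgt
      · -- i < k : y - i ≥ 1
        have : (1 : ℝ) ≤ y - i := by
          have : ((i : ℝ) + 1) ≤ (k : ℝ) := by exact_mod_cast hlt
          linarith
        exact tent_zero_of_one_le this
      · -- i > k : y - i < 0
        have : y - i ≤ 0 := by
          have : ((k : ℝ) + 1) ≤ (i : ℝ) := by exact_mod_cast hgt
          linarith
        exact tent_zero_of_nonpos this

/-- The `n`-th term of the Takagi series. -/
noncomputable def tg (n : ℕ) (x : ℝ) : ℝ :=
  ((1 : ℝ) / 2) ^ n * ∑ i ∈ Finset.range (2 ^ n), fs n i x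

lemma tg_eq (n : ℕ) {x : ℝ} (hx : x ∈ Set.Icc (0 : ℝ) 1) :
    tg n x = ((1 : ℝ) / 2) ^ n * TP (2 ^ n * x) := by
  unfold tg fs
  congr 1
  have h0 : (0 : ℝ) ≤ 2 ^ n * x := mul_nonneg (by positivity) hx.1
  have h1 : 2 ^ n * x ≤ ((2 ^ n : ℕ) : ℝ) := by
    push_cast
    nlinarith [hx.2, (by positivity : (0:ℝ) < (2:ℝ)^n)]
  exact collapse (2 ^ n) (2 ^ n * x) h0 h1

lemma tg_bound (n : ℕ) {x : ℝ} (hx : x ∈ Set.Icc (0 : ℝ) 1) : ‖tg n x‖ ≤ ((1:ℝ)/2) ^ n := by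
  rw [tg_eq n hx, Real.norm_eq_abs, abs_mul, abs_of_nonneg (by positivity : (0:ℝ) ≤ ((1:ℝ)/2)^n)]
  have h1 : |TP (2 ^ n * x)| ≤ 1 := by
    rw [abs_of_nonneg (TP_nonneg _)]; exact TP_le_one _
  nlinarith [pow_nonneg (by norm_num : (0:ℝ) ≤ 1/2) n]

lemma tg_summable {x : ℝ} (hx : x ∈ Set.Icc (0 : ℝ) 1) : Summable (fun n => tg n x) := by
  exact Summable.of_norm_bounded (summable_geometric_of_lt_one (by norm_num) (by norm_num))
    (fun n => tg_bound n hx)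

lemma tg_diff_bound₁ (n : ℕ) {x y : ℝ} (hx : x ∈ Set.Icc (0 : ℝ) 1)
    (hy : y ∈ Set.Icc (0 : ℝ) 1) : |tg n y - tg n x| ≤ 2 * |y - x| := by
  rw [tg_eq n hx, tg_eq n hy, ← mul_sub, abs_mul,
    abs_of_nonneg (by positivity : (0:ℝ) ≤ ((1:ℝ)/2)^n)]
  have h := TP_lip (2 ^ n * y) (2 ^ n * x)
  have h2 : |2 ^ n * y - 2 ^ n * x| = 2 ^ n * |y - x| := by
    rw [← mul_sub, abs_mul, abs_of_nonneg (by positivity : (0:ℝ) ≤ (2:ℝ)^n)]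
  rw [h2] at h
  have hpow : ((1:ℝ)/2) ^ n * (2:ℝ) ^ n = 1 := by
    rw [← mul_pow]; norm_num
  calc ((1:ℝ)/2) ^ n * |TP (2 ^ n * y) - TP (2 ^ n * x)|
      ≤ ((1:ℝ)/2) ^ n * (2 * (2 ^ n * |y - x|)) := by
        apply mul_le_mul_of_nonneg_left h (by positivity)
    _ = 2 * |y - x| := by
        rw [show ((1:ℝ)/2) ^ n * (2 * (2 ^ n * |y - x|))
            = 2 * |y - x| * (((1:ℝ)/2) ^ n * (2:ℝ) ^ n) by ring, hpow, mul_one]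

lemma tg_diff_bound₂ (n : ℕ) {x y : ℝ} (hx : x ∈ Set.Icc (0 : ℝ) 1)
    (hy : y ∈ Set.Icc (0 : ℝ) 1) : |tg n y - tg n x| ≤ 2 * ((1:ℝ)/2) ^ n := by
  have h1 := tg_bound n hx
  have h2 := tg_bound n hy
  rw [Real.norm_eq_abs] at h1 h2
  calc |tg n y - tg n x| ≤ |tg n y| + |tg n x| := abs_sub _ _
    _ ≤ 2 * ((1:ℝ)/2) ^ n := by linarith

set_option maxHeartbeats 1000000 in
/-- Takagi's function satisfies `|T(x+h) - T(x)| ≤ C |h| log(1/|h|)` for an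
absolute constant `C`, all `x ∈ [0,1]` and all `h` with `x + h ∈ [0,1]` and `0 < |h| < 1/2`. -/
theorem stmt16 :
    ∃ C : ℝ, ∀ x ∈ Set.Icc (0 : ℝ) 1, ∀ h : ℝ, x + h ∈ Set.Icc (0 : ℝ) 1 →
      0 < |h| → |h| < 1 / 2 →
      |takagi (x + h) - takagi x| ≤ C * |h| * Real.log (1 / |h|) := by
  refine ⟨8 / Real.log 2, ?_⟩
  intro x hx h hxh hh0 hh2
  have hlog2 : (0 : ℝ) < Real.log 2 := Real.log_pos (by norm_num)
  set L : ℝ := Real.logb 2 (1 / |h|) with hL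
  have hinv : (2 : ℝ) < 1 / |h| := by
    rw [lt_div_iff₀ hh0]; linarith
  have hL1 : 1 < L := by
    rw [hL]
    exact (Real.lt_logb_iff_rpow_lt (by norm_num) (by positivity)).mpr
      (by rw [Real.rpow_one]; exact hinv)
  set N : ℕ := ⌈L⌉₊ with hN
  have hNL : L ≤ N := Nat.le_ceil L
  have hNL2 : (N : ℝ) ≤ 2 * L := by
    have := Nat.ceil_lt_add_one (le_of_lt (lt_trans one_pos hL1))
    have h2 : (N : ℝ) < L + 1 := this
    linarith
  have hpowN : ((1:ℝ)/2) ^ N ≤ |h| := by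
    have h2N : (1 / |h| : ℝ) ≤ (2:ℝ) ^ N := by
      have : (2:ℝ) ^ L ≤ (2:ℝ) ^ (N : ℝ) :=
        Real.rpow_le_rpow_of_exponent_le (by norm_num) hNL
      rw [Real.rpow_natCast] at this
      rw [hL] at this
      rwa [Real.rpow_logb (by norm_num) (by norm_num) (by positivity)] at this
    rw [div_pow, one_pow, div_le_iff₀ (by positivity)]
    rw [div_le_iff₀ hh0] at h2N
    linarith
  -- the series setup
  have hsx : Summable (fun n => tg n x) := tg_summable hx
  have hsy : Summable (fun n => tg n (x + h)) := tg_summable hxh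
  have hdiff : takagi (x + h) - takagi x = ∑' n, (tg n (x + h) - tg n x) := by
    have e1 : takagi (x + h) = ∑' n, tg n (x + h) := rfl
    have e2 : takagi x = ∑' n, tg n x := rfl
    rw [e1, e2, Summable.tsum_sub hsy hsx]
  set d : ℕ → ℝ := fun n => min (2 * |h|) (2 * ((1:ℝ)/2) ^ n) with hd
  have hdle : ∀ n, |tg n (x + h) - tg n x| ≤ d n := by
    intro n
    refine le_min ?_ (tg_diff_bound₂ n hx hxh)
    have := tg_diff_bound₁ n hx hxh
    simpa using this
  have hds : Summable d := by
    apply Summable.of_nonneg_of_le (fun n => le_min (by positivity) (by positivity))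
      (fun n => min_le_right _ _)
    exact (summable_geometric_of_lt_one (by norm_num) (by norm_num)).mul_left 2
  have habs : Summable (fun n => |tg n (x + h) - tg n x|) := (hsy.sub hsx).abs
  have step1 : |takagi (x + h) - takagi x| ≤ ∑' n, d n := by
    rw [hdiff]
    have habs' : Summable (fun n => ‖tg n (x + h) - tg n x‖) := by
      simpa [Real.norm_eq_abs] using habs
    calc |∑' n, (tg n (x + h) - tg n x)| ≤ ∑' n, |tg n (x + h) - tg n x| := by
          have := norm_tsum_le_tsum_norm habs'
          simpa [Real.norm_eq_abs] using this
      _ ≤ ∑' n, d n := Summable.tsum_le_tsum hdle habs hds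
  -- split the tail
  have hsplit : ∑' n, d n = (∑ i ∈ Finset.range N, d i) + ∑' i, d (i + N) :=
    (Summable.sum_add_tsum_nat_add N hds).symm
  have hhead : (∑ i ∈ Finset.range N, d i) ≤ N * (2 * |h|) := by
    calc (∑ i ∈ Finset.range N, d i) ≤ ∑ i ∈ Finset.range N, 2 * |h| :=
          Finset.sum_le_sum (fun i _ => min_le_left _ _)
      _ = N * (2 * |h|) := by rw [Finset.sum_const, Finset.card_range]; simp
  have htail : (∑' i, d (i + N)) ≤ 4 * ((1:ℝ)/2) ^ N := by
    have hgs : Summable (fun i : ℕ => (2 * ((1:ℝ)/2) ^ N) * ((1:ℝ)/2) ^ i) :=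
      (summable_geometric_of_lt_one (by norm_num) (by norm_num)).mul_left _
    calc (∑' i, d (i + N)) ≤ ∑' i : ℕ, (2 * ((1:ℝ)/2) ^ N) * ((1:ℝ)/2) ^ i := by
          apply Summable.tsum_le_tsum _ ((hds.comp_injective (add_left_injective N))) hgs
          intro i
          calc d (i + N) ≤ 2 * ((1:ℝ)/2) ^ (i + N) := min_le_right _ _
            _ = (2 * ((1:ℝ)/2) ^ N) * ((1:ℝ)/2) ^ i := by rw [pow_add]; ring
      _ = (2 * ((1:ℝ)/2) ^ N) * ∑' i : ℕ, ((1:ℝ)/2) ^ i := tsum_mul_left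
      _ = 4 * ((1:ℝ)/2) ^ N := by
          rw [tsum_geometric_of_lt_one (by norm_num) (by norm_num)]; norm_num; ring
  have hbound : |takagi (x + h) - takagi x| ≤ (N : ℝ) * (2 * |h|) + 4 * |h| := by
    calc |takagi (x + h) - takagi x| ≤ ∑' n, d n := step1
      _ = (∑ i ∈ Finset.range N, d i) + ∑' i, d (i + N) := hsplit
      _ ≤ N * (2 * |h|) + 4 * ((1:ℝ)/2) ^ N := add_le_add hhead htail
      _ ≤ N * (2 * |h|) + 4 * |h| := by nlinarith [hpowN]
  have hLlog : L = Real.log (1 / |h|) / Real.log 2 := by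
    rw [hL, Real.logb]
  have hlogpos : 0 < Real.log (1 / |h|) := by
    apply Real.log_pos; linarith
  calc |takagi (x + h) - takagi x| ≤ (N : ℝ) * (2 * |h|) + 4 * |h| := hbound
    _ ≤ (2 * L) * (2 * |h|) + 4 * (L * |h|) := by nlinarith [hh0, hNL2, hL1]
    _ = 8 * L * |h| := by ring
    _ = 8 / Real.log 2 * |h| * Real.log (1 / |h|) := by
        rw [hLlog]; field_simp
end

section
/- Attach to each vertex of the infinite binary tree an independent standard normal random variable; call a vertex at level n exceptional if the absolute value of its variable is less than 2^{−εn}, for a fixed ε > 0. Then almost surely every infinite branch of the tree contains infinitely many non-exceptional vertices. -/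
open Filter Set Topology MeasureTheory ProbabilityTheory
open scoped NNReal ENNReal

section Aux
open Real

lemma gaussPDF_le_half (x : ℝ) : gaussianPDF 0 1 x ≤ ENNReal.ofReal (1/2) := by
  rw [gaussianPDF]
  refine ENNReal.ofReal_le_ofReal ?_
  rw [gaussianPDFReal]
  have hs : (2:ℝ) ≤ Real.sqrt (2 * π * ((1:ℝ≥0):ℝ)) := by
    rw [Real.le_sqrt (by norm_num) (by positivity)]
    have := Real.pi_gt_three
    push_cast
    nlinarith
  have h2 : Real.exp (-(x - 0)^2 / (2 * ((1:ℝ≥0):ℝ))) ≤ 1 := by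
    rw [Real.exp_le_one_iff]
    have : (0:ℝ) ≤ (x - 0)^2 := sq_nonneg _
    push_cast
    nlinarith
  have hinv : (Real.sqrt (2 * π * ((1:ℝ≥0):ℝ)))⁻¹ ≤ 1/2 := by
    rw [show (1:ℝ)/2 = 2⁻¹ by norm_num]
    exact inv_anti₀ (by norm_num) hs
  calc (Real.sqrt (2 * π * ((1:ℝ≥0):ℝ)))⁻¹ * Real.exp (-(x - 0)^2 / (2 * ((1:ℝ≥0):ℝ)))
      ≤ (1/2) * 1 := mul_le_mul hinv h2 (Real.exp_nonneg _) (by norm_num)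
    _ = 1/2 := by norm_num

lemma gauss_abs_lt_le (δ : ℝ) (hδ : 0 ≤ δ) :
    gaussianReal 0 1 {x : ℝ | |x| < δ} ≤ ENNReal.ofReal δ := by
  have hset : {x : ℝ | |x| < δ} = Set.Ioo (-δ) δ := by ext x; simp [abs_lt]
  rw [hset, gaussianReal_apply 0 one_ne_zero]
  calc ∫⁻ x in Set.Ioo (-δ) δ, gaussianPDF 0 1 x
      ≤ ∫⁻ _ in Set.Ioo (-δ) δ, ENNReal.ofReal (1/2) :=
        setLIntegral_mono' measurableSet_Ioo (fun x _ => gaussPDF_le_half x)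
    _ = ENNReal.ofReal (1/2) * volume (Set.Ioo (-δ) δ) := by rw [setLIntegral_const]
    _ = ENNReal.ofReal (1/2) * ENNReal.ofReal (δ - -δ) := by rw [Real.volume_Ioo]
    _ ≤ ENNReal.ofReal δ := by
        rw [← ENNReal.ofReal_mul (by norm_num)]
        exact ENNReal.ofReal_le_ofReal (by linarith)

lemma event_le {Ω : Type*} [MeasurableSpace Ω] (P : Measure Ω) (X : Ω → ℝ) (hX : Measurable X)
    (hd : Measure.map X P = gaussianReal 0 1) (δ : ℝ) (hδ : 0 ≤ δ) :
    P {ω | |X ω| < δ} ≤ ENNReal.ofReal δ := by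
  have hms : MeasurableSet {x : ℝ | |x| < δ} := by
    have : {x : ℝ | |x| < δ} = Set.Ioo (-δ) δ := by ext x; simp [abs_lt]
    rw [this]; exact measurableSet_Ioo
  have h1 : P {ω | |X ω| < δ} = Measure.map X P {x | |x| < δ} :=
    (Measure.map_apply hX hms).symm
  rw [h1, hd]; exact gauss_abs_lt_le δ hδ

lemma sum_Icc_lb (N m : ℕ) (h : N ≤ m) :
    ((m:ℝ) - N) * ((m:ℝ) - N + 1) / 2 ≤ ∑ n ∈ Finset.Icc N m, (n:ℝ) := by
  have h1 : ∑ n ∈ Finset.Icc N m, ((n:ℝ) - N) ≤ ∑ n ∈ Finset.Icc N m, (n:ℝ) := by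
    refine Finset.sum_le_sum fun n hn => ?_
    have := (Finset.mem_Icc.mp hn).1
    have : (N:ℝ) ≤ n := by exact_mod_cast this
    linarith
  refine le_trans ?_ h1
  rw [show Finset.Icc N m = Finset.Ico N (m+1) by rw [Finset.Ico_add_one_right_eq_Icc],
    Finset.sum_Ico_eq_sum_range]
  have h2 : ∀ i ∈ Finset.range (m + 1 - N), ((N + i : ℕ):ℝ) - N = (i:ℝ) := by
    intro i _; push_cast; ring
  rw [Finset.sum_congr rfl h2]
  have h3 : (∑ i ∈ Finset.range (m + 1 - N), i) * 2 = (m + 1 - N) * (m + 1 - N - 1) :=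
    Finset.sum_range_id_mul_two _
  have h4 : (∑ i ∈ Finset.range (m + 1 - N), (i:ℝ)) * 2 = ((m:ℝ) - N + 1) * ((m:ℝ) - N) := by
    have hc : ((∑ i ∈ Finset.range (m + 1 - N), i : ℕ):ℝ) * 2
        = (((m + 1 - N):ℕ):ℝ) * (((m + 1 - N - 1):ℕ):ℝ) := by exact_mod_cast congrArg Nat.cast h3
    have e0 : m + 1 - N - 1 = m - N := by omega
    have e1 : (((m + 1 - N):ℕ):ℝ) = (m:ℝ) - N + 1 := by
      rw [Nat.cast_sub (by omega)]; push_cast; ring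
    have e2 : (((m - N):ℕ):ℝ) = (m:ℝ) - N := by rw [Nat.cast_sub h]
    rw [e0, e1, e2, Nat.cast_sum] at hc
    exact hc
  linarith

lemma tendsto_lin_sub (N : ℕ) (ε : ℝ) (hε : 0 < ε) :
    Tendsto (fun m : ℕ => (m:ℝ) - ε * ∑ n ∈ Finset.Icc N m, (n:ℝ)) atTop atBot := by
  have hlin : Tendsto (fun m : ℕ => (N:ℝ) - m) atTop atBot := by
    have h1 : Tendsto (fun m : ℕ => -(m:ℝ)) atTop atBot :=
      tendsto_neg_atBot_iff.mpr tendsto_natCast_atTop_atTop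
    have := tendsto_atBot_add_const_left atTop (N:ℝ) h1
    simpa [sub_eq_add_neg] using this
  refine tendsto_atBot_mono' _ ?_ hlin
  set K : ℕ := max N (Nat.ceil (8/ε)) with hK
  filter_upwards [eventually_ge_atTop (N + K + 1)] with m hm
  have hNm : N ≤ m := by omega
  have hS := sum_Icc_lb N m hNm
  obtain ⟨d, hd⟩ : ∃ d : ℝ, d = (m:ℝ) - N := ⟨_, rfl⟩
  rw [← hd] at hS
  have hd0 : (0:ℝ) ≤ d := by
    have : (N:ℝ) ≤ m := by exact_mod_cast hNm
    linarith
  have hdK : (K:ℝ) + 1 ≤ d := by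
    have : ((N + K + 1 : ℕ):ℝ) ≤ m := by exact_mod_cast hm
    push_cast at this
    simp only [hd]; linarith
  have hdN : (N:ℝ) ≤ d := by
    have : (N:ℝ) ≤ K := by exact_mod_cast le_max_left N _
    linarith
  have hεd : 8 ≤ ε * d := by
    have h8 : (8/ε : ℝ) ≤ K := le_trans (Nat.le_ceil _) (by exact_mod_cast le_max_right N _)
    have : 8/ε ≤ d := by linarith
    calc (8:ℝ) = ε * (8/ε) := by field_simp
      _ ≤ ε * d := by exact mul_le_mul_of_nonneg_left this hε.le
  have hεS : ε * (d * (d + 1) / 2) ≤ ε * ∑ n ∈ Finset.Icc N m, (n:ℝ) :=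
    mul_le_mul_of_nonneg_left hS hε.le
  have hm' : (m:ℝ) = d + N := by rw [hd]; ring
  have k0 : 8 * (d+1) ≤ (ε * d) * (d+1) :=
    mul_le_mul_of_nonneg_right hεd (by linarith : (0:ℝ) ≤ d + 1)
  have k1 : 4*(d+1) ≤ ε * (d*(d+1)/2) := by linarith
  have hN0 : (0:ℝ) ≤ N := Nat.cast_nonneg N
  linarith

end Aux

/-- attach i.i.d. standard normal random variables to the vertices of the
infinite binary tree; a vertex at level `n` is exceptional if its variable has absolute value
less than `2^{-εn}`. Almost surely, every infinite branch contains infinitely many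
non-exceptional vertices. -/
theorem stmt18 {Ω : Type*} [MeasurableSpace Ω] (P : Measure Ω) [IsProbabilityMeasure P]
    (ξ : ℕ × ℕ → Ω → ℝ) (hmeas : ∀ p, Measurable (ξ p))
    (hdist : ∀ p : ℕ × ℕ, Measure.map (ξ p) P = gaussianReal 0 1)
    (hindep : iIndepFun ξ P)
    (ε : ℝ) (hε : 0 < ε) :
    ∀ᵐ ω ∂P, ∀ b : ℕ → ℕ, b 0 = 0 →
      (∀ n, b (n + 1) = 2 * b n ∨ b (n + 1) = 2 * b n + 1) →
      {n : ℕ | (2 : ℝ) ^ (-(ε * (n : ℝ))) ≤ |ξ (n, b n) ω|}.Infinite := by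
  classical
  -- basic events
  let E : ℕ × ℕ → Set Ω := fun p => {ω | |ξ p ω| < (2:ℝ) ^ (-(ε * (p.1 : ℝ)))}
  let C : ℕ → ℕ → Set Ω := fun N m =>
    ⋃ j ∈ Finset.range (2 ^ m), ⋂ n ∈ Finset.Icc N m, E (n, j / 2 ^ (m - n))
  let Z : ℕ → Set Ω := fun N => ⋂ m, C N m
  -- single factor bound
  have hc_nonneg : ∀ n : ℕ, (0:ℝ) ≤ (2:ℝ) ^ (-(ε * (n:ℝ))) :=
    fun n => Real.rpow_nonneg (by norm_num) _
  have hfactor : ∀ p : ℕ × ℕ, P (E p) ≤ ENNReal.ofReal ((2:ℝ) ^ (-(ε * (p.1:ℝ)))) :=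
    fun p => event_le P (ξ p) (hmeas p) (hdist p) _ (hc_nonneg p.1)
  -- comap measurability of events
  have hEmeas : ∀ p : ℕ × ℕ,
      MeasurableSet[(inferInstance : MeasurableSpace ℝ).comap (ξ p)] (E p) := by
    intro p
    refine ⟨{x : ℝ | |x| < (2:ℝ) ^ (-(ε * (p.1:ℝ)))}, ?_, rfl⟩
    have hs : {x : ℝ | |x| < (2:ℝ) ^ (-(ε * (p.1:ℝ)))}
        = Set.Ioo (-((2:ℝ) ^ (-(ε * (p.1:ℝ))))) ((2:ℝ) ^ (-(ε * (p.1:ℝ)))) := by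
      ext x; simp [abs_lt]
    rw [hs]; exact measurableSet_Ioo
  -- independence: measure of intersections
  have hinter : ∀ N m j, P (⋂ n ∈ Finset.Icc N m, E (n, j / 2 ^ (m - n)))
      = ∏ n ∈ Finset.Icc N m, P (E (n, j / 2 ^ (m - n))) := by
    intro N m j
    have h := hindep.meas_biInter
      (S := (Finset.Icc N m).image (fun n => (n, j / 2 ^ (m - n)))) (s := E)
      (fun p _ => hEmeas p)
    rw [Finset.set_biInter_finset_image, Finset.prod_image
      (fun a _ b _ h => congrArg Prod.fst h)] at h
    exact h
  -- bound on C N m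
  have hCle : ∀ N m, P (C N m)
      ≤ (2:ℝ≥0∞) ^ m * ∏ n ∈ Finset.Icc N m, ENNReal.ofReal ((2:ℝ) ^ (-(ε * (n:ℝ)))) := by
    intro N m
    calc P (C N m) ≤ ∑ j ∈ Finset.range (2^m),
          P (⋂ n ∈ Finset.Icc N m, E (n, j / 2 ^ (m - n))) :=
        measure_biUnion_finset_le (μ := P) (Finset.range (2^m)) _
      _ ≤ ∑ _j ∈ Finset.range (2^m),
          ∏ n ∈ Finset.Icc N m, ENNReal.ofReal ((2:ℝ) ^ (-(ε * (n:ℝ)))) := by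
          refine Finset.sum_le_sum fun j _ => ?_
          rw [hinter N m j]
          exact Finset.prod_le_prod' fun n _ => hfactor (n, j / 2 ^ (m - n))
      _ = (2:ℝ≥0∞) ^ m * ∏ n ∈ Finset.Icc N m, ENNReal.ofReal ((2:ℝ) ^ (-(ε * (n:ℝ)))) := by
          rw [Finset.sum_const, Finset.card_range, nsmul_eq_mul]
          push_cast
          ring
  -- rewrite bound as ofReal of exponential
  have hgb : ∀ N m : ℕ,
      (2:ℝ≥0∞) ^ m * ∏ n ∈ Finset.Icc N m, ENNReal.ofReal ((2:ℝ) ^ (-(ε * (n:ℝ))))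
      = ENNReal.ofReal (Real.exp (Real.log 2 *
          ((m:ℝ) - ε * ∑ n ∈ Finset.Icc N m, (n:ℝ)))) := by
    intro N m
    have e1 : (2:ℝ≥0∞) ^ m = ENNReal.ofReal ((2:ℝ) ^ m) := by
      rw [ENNReal.ofReal_pow (by norm_num)]
      norm_num
    have e2 : ∏ n ∈ Finset.Icc N m, ENNReal.ofReal ((2:ℝ) ^ (-(ε * (n:ℝ))))
        = ENNReal.ofReal (∏ n ∈ Finset.Icc N m, (2:ℝ) ^ (-(ε * (n:ℝ)))) :=
      (ENNReal.ofReal_prod_of_nonneg (fun n _ => hc_nonneg n)).symm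
    rw [e1, e2, ← ENNReal.ofReal_mul (by positivity)]
    congr 1
    have e3 : (2:ℝ) ^ m = Real.exp (Real.log 2 * m) := by
      rw [mul_comm, Real.exp_nat_mul, Real.exp_log (by norm_num : (0:ℝ) < 2)]
    have e4 : ∀ n : ℕ, (2:ℝ) ^ (-(ε * (n:ℝ))) = Real.exp (Real.log 2 * (-(ε * n))) := by
      intro n; rw [Real.rpow_def_of_pos (by norm_num : (0:ℝ) < 2)]
    rw [e3, Finset.prod_congr rfl (fun n _ => e4 n), ← Real.exp_sum, ← Real.exp_add]
    congr 1
    have e5 : ∑ n ∈ Finset.Icc N m, Real.log 2 * (-(ε * (n:ℝ)))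
        = Real.log 2 * (-(ε * ∑ n ∈ Finset.Icc N m, (n:ℝ))) := by
      calc ∑ n ∈ Finset.Icc N m, Real.log 2 * (-(ε * (n:ℝ)))
          = ∑ n ∈ Finset.Icc N m, (-(Real.log 2 * ε)) * (n:ℝ) :=
            Finset.sum_congr rfl fun n _ => by ring
        _ = (-(Real.log 2 * ε)) * ∑ n ∈ Finset.Icc N m, (n:ℝ) := by
            rw [Finset.mul_sum]
        _ = Real.log 2 * (-(ε * ∑ n ∈ Finset.Icc N m, (n:ℝ))) := by ring
    rw [e5]; ring
  -- P (Z N) = 0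
  have hZ0 : ∀ N, P (Z N) = 0 := by
    intro N
    have hle : ∀ m : ℕ, P (Z N) ≤ ENNReal.ofReal (Real.exp (Real.log 2 *
        ((m:ℝ) - ε * ∑ n ∈ Finset.Icc N m, (n:ℝ)))) := by
      intro m
      calc P (Z N) ≤ P (C N m) := measure_mono (Set.iInter_subset _ m)
        _ ≤ _ := (hCle N m).trans_eq (hgb N m)
    have htend : Tendsto (fun m : ℕ => ENNReal.ofReal (Real.exp (Real.log 2 *
        ((m:ℝ) - ε * ∑ n ∈ Finset.Icc N m, (n:ℝ))))) atTop (𝓝 0) := by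
      have h1 : Tendsto (fun m : ℕ => Real.log 2 *
          ((m:ℝ) - ε * ∑ n ∈ Finset.Icc N m, (n:ℝ))) atTop atBot :=
        (tendsto_lin_sub N ε hε).const_mul_atBot (Real.log_pos one_lt_two)
      have h2 := Real.tendsto_exp_atBot.comp h1
      have h3 := ENNReal.tendsto_ofReal (a := 0) h2
      simpa [Function.comp] using h3
    have := ge_of_tendsto' htend hle
    simpa using le_antisymm this zero_le
  -- total null set
  have hU : P (⋃ N, Z N) = 0 := by
    refine le_antisymm ?_ zero_le
    calc P (⋃ N, Z N) ≤ ∑' N, P (Z N) := measure_iUnion_le _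
      _ = 0 := by simp [hZ0]
  -- conclude
  rw [ae_iff]
  refine measure_mono_null ?_ hU
  intro ω hω
  simp only [Set.mem_setOf_eq] at hω
  push_neg at hω
  obtain ⟨b, hb0, hstep, hfin⟩ := hω
  have hfin' : {n : ℕ | (2 : ℝ) ^ (-(ε * (n : ℝ))) ≤ |ξ (n, b n) ω|}.Finite :=
    hfin
  obtain ⟨N, hN⟩ := hfin'.bddAbove
  have hexc : ∀ n, N + 1 ≤ n → |ξ (n, b n) ω| < (2:ℝ) ^ (-(ε * (n:ℝ))) := by
    intro n hn
    by_contra hcon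
    have : n ∈ {n : ℕ | (2 : ℝ) ^ (-(ε * (n : ℝ))) ≤ |ξ (n, b n) ω|} := not_lt.mp hcon
    have := hN this
    omega
  -- branch facts
  have hdiv : ∀ n k, b n = b (n + k) / 2 ^ k := by
    intro n k
    induction k with
    | zero => simp
    | succ k ih =>
      have h2 : b (n + k + 1) / 2 = b (n + k) := by rcases hstep (n + k) with h | h <;> omega
      rw [ih, ← h2, Nat.div_div_eq_div_mul, ← pow_succ']
      rfl
  have hdiv' : ∀ n m, n ≤ m → b n = b m / 2 ^ (m - n) := by
    intro n m hnm
    obtain ⟨k, rfl⟩ := Nat.exists_eq_add_of_le hnm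
    simpa using hdiv n k
  have hlt : ∀ n, b n < 2 ^ n := by
    intro n
    induction n with
    | zero => simp [hb0]
    | succ n ih => rcases hstep n with h | h <;> rw [h, pow_succ] <;> omega
  -- ω ∈ Z (N+1)
  refine Set.mem_iUnion.mpr ⟨N + 1, Set.mem_iInter.mpr fun m => ?_⟩
  refine Set.mem_iUnion₂.mpr ⟨b m, Finset.mem_range.mpr (hlt m), Set.mem_iInter₂.mpr
    fun n hn => ?_⟩
  rw [Finset.mem_Icc] at hn
  have hbn : b m / 2 ^ (m - n) = b n := (hdiv' n m hn.2).symm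
  show ω ∈ E (n, b m / 2 ^ (m - n))
  rw [hbn]
  exact hexc n hn.1
end
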